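/- arXiv:2108.03197 — 2 statements merged into one kernel-verified Lean document; each statement's English description precedes it below -/
import Mathlib

section
/- Lemma 5.12, case (B): Let n ≥ 2 and let L : ℝ^n ∖ {0} → ℝ be smooth, positively 2-homogeneous, with positive definite fundamental tensor g_ij(y) := (1/2) L_{·i·j}(y) for every y ≠ 0 (a fiberwise Finsler datum). Let α ∈ ℝ and κ > α(α + n − 2). If f : ℝ^n ∖ {0} → ℝ is smooth, positively α-homogeneous, and satisfies κ f − L g^{ab} f_{·a·b} = 0 on ℝ^n ∖ {0}, then f = 0. -/
open scoped BigOperators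
open Filter Topology

noncomputable section

/-- Partial derivative `∂f/∂y^i`. -/
def pd {n : ℕ} (f : (Fin n → ℝ) → ℝ) (i : Fin n) : (Fin n → ℝ) → ℝ :=
  fun y => fderiv ℝ f y (Pi.single i 1)

/-- `C` is a conic set: stable under positive scalings. -/
def Conic {n : ℕ} (C : Set (Fin n → ℝ)) : Prop :=
  ∀ ⦃y⦄, y ∈ C → ∀ ⦃t : ℝ⦄, 0 < t → t • y ∈ C

/-- `f` is positively `α`-homogeneous on `C`. -/
def PosHom {n : ℕ} (α : ℝ) (C : Set (Fin n → ℝ)) (f : (Fin n → ℝ) → ℝ) : Prop :=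
  ∀ y ∈ C, ∀ t : ℝ, 0 < t → f (t • y) = t ^ α * f y

/-- Vector-valued positively `α`-homogeneous map on `C`. -/
def PosHomMap {n : ℕ} (α : ℝ) (C : Set (Fin n → ℝ)) (Z : (Fin n → ℝ) → Fin n → ℝ) : Prop :=
  ∀ y ∈ C, ∀ t : ℝ, 0 < t → Z (t • y) = t ^ α • Z y

/-- Fundamental tensor `g_ij(y) = (1/2) L_{·i·j}(y)`. -/
def gmet {n : ℕ} (L : (Fin n → ℝ) → ℝ) (y : Fin n → ℝ) : Matrix (Fin n) (Fin n) ℝ :=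
  Matrix.of fun i j => (1 / 2) * pd (pd L i) j y

/-- Inverse fundamental tensor `g^{ij}`. -/
def ginv {n : ℕ} (L : (Fin n → ℝ) → ℝ) (y : Fin n → ℝ) : Matrix (Fin n) (Fin n) ℝ :=
  (gmet L y)⁻¹

namespace MPF

variable {n : ℕ}

abbrev U (n : ℕ) : Set (Fin n → ℝ) := {y : Fin n → ℝ | y ≠ 0}

lemma isOpenU : IsOpen (U n) := isOpen_ne

lemma smul_memU {y : Fin n → ℝ} (hy : y ∈ U n) {t : ℝ} (ht : 0 < t) : t • y ∈ U n :=
  smul_ne_zero ht.ne' hy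

lemma fderiv_eq_sum_pd (f : (Fin n → ℝ) → ℝ) (y v : Fin n → ℝ) :
    fderiv ℝ f y v = ∑ a, v a * pd f a y := by
  have hv : v = ∑ a, v a • (Pi.single a (1:ℝ) : Fin n → ℝ) := by
    funext j
    simp [Pi.single_apply, Finset.sum_apply]
  conv_lhs => rw [hv]
  rw [map_sum]
  simp [pd, smul_eq_mul]

lemma diffAt {f : (Fin n → ℝ) → ℝ} (hf : ContDiffOn ℝ (⊤ : ℕ∞) f (U n))
    {y : Fin n → ℝ} (hy : y ∈ U n) : DifferentiableAt ℝ f y :=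
  (hf.contDiffAt (isOpenU.mem_nhds hy)).differentiableAt (by simp)

lemma pd_contDiffOn {f : (Fin n → ℝ) → ℝ} (hf : ContDiffOn ℝ (⊤ : ℕ∞) f (U n)) (i : Fin n) :
    ContDiffOn ℝ (⊤ : ℕ∞) (pd f i) (U n) :=
  (((contDiffOn_infty_iff_fderiv_of_isOpen isOpenU).1 hf).2.clm_apply contDiffOn_const)

/-- Euler's relation for positively homogeneous functions. -/
lemma euler {f : (Fin n → ℝ) → ℝ} {α : ℝ} (hf : ContDiffOn ℝ (⊤ : ℕ∞) f (U n))
    (hhom : PosHom α (U n) f) {y : Fin n → ℝ} (hy : y ∈ U n) :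
    ∑ a, y a * pd f a y = α * f y := by
  have h1 : HasDerivAt (fun t : ℝ => t • y) y 1 := by
    simpa using (hasDerivAt_id (1:ℝ)).smul_const y
  have hF : HasFDerivAt f (fderiv ℝ f y) ((1:ℝ) • y) := by
    rw [one_smul]; exact (diffAt hf hy).hasFDerivAt
  have h2 : HasDerivAt (fun t : ℝ => f (t • y)) (fderiv ℝ f y y) 1 := by
    exact hF.comp_hasDerivAt 1 h1
  have h3 : HasDerivAt (fun t : ℝ => t ^ α * f y) (α * f y) 1 := by
    have := (Real.hasDerivAt_rpow_const (x := (1:ℝ)) (p := α) (Or.inl one_ne_zero)).mul_const (f y)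
    simpa using this
  have heqv : (fun t : ℝ => f (t • y)) =ᶠ[𝓝 (1:ℝ)] (fun t : ℝ => t ^ α * f y) := by
    filter_upwards [eventually_gt_nhds (by norm_num : (0:ℝ) < 1)] with t ht
    exact hhom y hy t ht
  have h4 : HasDerivAt (fun t : ℝ => f (t • y)) (α * f y) 1 := h3.congr_of_eventuallyEq heqv
  have h5 : α * f y = fderiv ℝ f y y := h4.unique h2
  rw [fderiv_eq_sum_pd] at h5
  exact h5.symm


/-- The partial derivatives of an `α`-homogeneous function are `(α-1)`-homogeneous. -/
lemma pd_hom {f : (Fin n → ℝ) → ℝ} {α : ℝ} (hf : ContDiffOn ℝ (⊤ : ℕ∞) f (U n))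
    (hhom : PosHom α (U n) f) (i : Fin n) : PosHom (α - 1) (U n) (pd f i) := by
  intro y hy t ht
  have hty : t • y ∈ U n := smul_memU hy ht
  -- derivative of z ↦ f (t • z) at y, two ways
  have hsm : HasFDerivAt (fun z : Fin n → ℝ => t • z)
      (t • ContinuousLinearMap.id ℝ (Fin n → ℝ)) y := (hasFDerivAt_id y).const_smul t
  have h1 : HasFDerivAt (fun z => f (t • z))
      ((fderiv ℝ f (t • y)).comp (t • ContinuousLinearMap.id ℝ (Fin n → ℝ))) y :=
    (diffAt hf hty).hasFDerivAt.comp y hsm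
  have h2 : HasFDerivAt (fun z => t ^ α * f z) (t ^ α • fderiv ℝ f y) y :=
    ((diffAt hf hy).hasFDerivAt).const_smul (t ^ α)
  have heqv : (fun z => t ^ α * f z) =ᶠ[𝓝 y] (fun z => f (t • z)) := by
    filter_upwards [isOpenU.mem_nhds hy] with z hz
    exact (hhom z hz t ht).symm
  have h3 : HasFDerivAt (fun z => f (t • z)) (t ^ α • fderiv ℝ f y) y :=
    h2.congr_of_eventuallyEq heqv.symm
  have h4 := h3.unique h1
  have h5 := congrFun (congrArg DFunLike.coe h4) (Pi.single i 1)
  simp only [ContinuousLinearMap.coe_smul', Pi.smul_apply, ContinuousLinearMap.coe_comp',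
    Function.comp_apply, ContinuousLinearMap.id_apply, smul_eq_mul] at h5
  -- h5 : t ^ α * fderiv f y e = fderiv f (t•y) (t • e)
  have h6 : t ^ α * pd f i y = t * pd f i (t • y) := by
    simp only [pd]
    rw [h5, map_smul, smul_eq_mul]
  have ht' : (t:ℝ) ≠ 0 := ht.ne'
  have : t ^ (α - 1) = t ^ α / t := by
    rw [Real.rpow_sub ht, Real.rpow_one]
  rw [this]
  field_simp
  linarith [h6]

/-- `pd L a y = ∑ b, 2 * g_ab * y b`,  i.e. Euler for `pd L a`. -/
lemma pdL_eq (L : (Fin n → ℝ) → ℝ) (hL : ContDiffOn ℝ (⊤ : ℕ∞) L (U n))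
    (hLhom : PosHom 2 (U n) L) {y : Fin n → ℝ} (hy : y ∈ U n) (a : Fin n) :
    pd L a y = ∑ b, 2 * gmet L y a b * y b := by
  have h := euler (pd_contDiffOn hL a) (pd_hom hL hLhom a) hy
  have h2 : ((2:ℝ) - 1) = 1 := by norm_num
  rw [h2, one_mul] at h
  rw [← h]
  apply Finset.sum_congr rfl
  intro b _
  simp [gmet, pd]
  ring

/-- `L y = yᵀ G y` on `U`. -/
lemma L_eq_quad (L : (Fin n → ℝ) → ℝ) (hL : ContDiffOn ℝ (⊤ : ℕ∞) L (U n))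
    (hLhom : PosHom 2 (U n) L) {y : Fin n → ℝ} (hy : y ∈ U n) :
    L y = ∑ a, ∑ b, y a * gmet L y a b * y b := by
  have h := euler hL hLhom hy
  have : ∑ a, y a * pd L a y = ∑ a, ∑ b, 2 * (y a * gmet L y a b * y b) := by
    apply Finset.sum_congr rfl
    intro a _
    rw [pdL_eq L hL hLhom hy a, Finset.mul_sum]
    apply Finset.sum_congr rfl
    intro b _
    ring
  rw [this] at h
  have h2 : ∑ a, ∑ b, 2 * (y a * gmet L y a b * y b) = 2 * ∑ a, ∑ b, y a * gmet L y a b * y b := by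
    rw [Finset.mul_sum]
    apply Finset.sum_congr rfl
    intro a _
    rw [Finset.mul_sum]
  rw [h2] at h
  linarith

lemma L_pos (L : (Fin n → ℝ) → ℝ) (hL : ContDiffOn ℝ (⊤ : ℕ∞) L (U n))
    (hLhom : PosHom 2 (U n) L) (hgpos : ∀ y : Fin n → ℝ, y ≠ 0 → (gmet L y).PosDef)
    {y : Fin n → ℝ} (hy : y ∈ U n) : 0 < L y := by
  have h := (hgpos y hy).dotProduct_mulVec_pos hy
  rw [L_eq_quad L hL hLhom hy]
  have : dotProduct (star y) ((gmet L y).mulVec y)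
      = ∑ a, ∑ b, y a * gmet L y a b * y b := by
    simp [dotProduct, Matrix.mulVec, Finset.mul_sum, mul_assoc]
  rw [this] at h
  exact h


section MatrixIdent

variable (L : (Fin n → ℝ) → ℝ)

lemma gmet_symm {y : Fin n → ℝ} (hg : (gmet L y).PosDef) (a b : Fin n) :
    gmet L y a b = gmet L y b a := by
  have h := hg.1
  conv_lhs => rw [← h]
  simp [Matrix.conjTranspose_apply]

lemma ginv_mul_gmet {y : Fin n → ℝ} (hg : (gmet L y).PosDef) :
    (gmet L y)⁻¹ * gmet L y = 1 :=
  Matrix.nonsing_inv_mul _ (isUnit_iff_ne_zero.mpr hg.det_pos.ne')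

/-- `∑ g^{ab} L_{·a·b} = 2 n`. -/
lemma trace_ident {y : Fin n → ℝ} (hg : (gmet L y).PosDef) :
    ∑ a, ∑ b, (gmet L y)⁻¹ a b * pd (pd L a) b y = 2 * n := by
  have key : ∀ a b : Fin n, pd (pd L a) b y = 2 * gmet L y a b := by
    intro a b; simp [gmet]
  have h1 : ∑ a, ∑ b, (gmet L y)⁻¹ a b * pd (pd L a) b y
      = 2 * ∑ a, ∑ b, (gmet L y)⁻¹ a b * gmet L y b a := by
    rw [Finset.mul_sum]
    refine Finset.sum_congr rfl fun a _ => ?_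
    rw [Finset.mul_sum]
    refine Finset.sum_congr rfl fun b _ => ?_
    rw [key a b, gmet_symm L hg a b]
    ring
  have h2 : ∑ a, ∑ b, (gmet L y)⁻¹ a b * gmet L y b a
      = Matrix.trace ((gmet L y)⁻¹ * gmet L y) := by
    simp [Matrix.trace, Matrix.mul_apply, Matrix.diag]
  rw [h1, h2, ginv_mul_gmet L hg]
  simp [Matrix.trace]

/-- `∑ g^{ab} L_{·a} L_{·b} = 4 L`. -/
lemma grad_ident (hL : ContDiffOn ℝ (⊤ : ℕ∞) L (U n)) (hLhom : PosHom 2 (U n) L)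
    {y : Fin n → ℝ} (hy : y ∈ U n) (hg : (gmet L y).PosDef) :
    ∑ a, ∑ b, (gmet L y)⁻¹ a b * pd L a y * pd L b y = 4 * L y := by
  set G := gmet L y with hG
  have hw : ∀ a, pd L a y = 2 * (G.mulVec y) a := by
    intro a
    rw [pdL_eq L hL hLhom hy a]
    simp [Matrix.mulVec, dotProduct, Finset.mul_sum]
    exact Finset.sum_congr rfl fun b _ => by ring
  have h1 : ∑ a, ∑ b, G⁻¹ a b * pd L a y * pd L b y
      = 4 * ∑ a, (G.mulVec y) a * ∑ b, G⁻¹ a b * (G.mulVec y) b := by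
    rw [Finset.mul_sum]
    refine Finset.sum_congr rfl fun a _ => ?_
    rw [Finset.mul_sum, Finset.mul_sum]
    refine Finset.sum_congr rfl fun b _ => ?_
    rw [hw a, hw b]
    ring
  have h2 : ∀ a, ∑ b, G⁻¹ a b * (G.mulVec y) b = (G⁻¹.mulVec (G.mulVec y)) a := by
    intro a; simp [Matrix.mulVec, dotProduct]
  have h3 : G⁻¹.mulVec (G.mulVec y) = y := by
    rw [Matrix.mulVec_mulVec, ginv_mul_gmet L hg]
    simp
  have h4 : ∑ a, (G.mulVec y) a * y a = L y := by
    rw [L_eq_quad L hL hLhom hy]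
    refine Finset.sum_congr rfl fun a _ => ?_
    simp [Matrix.mulVec, dotProduct, Finset.sum_mul]
    exact Finset.sum_congr rfl fun b _ => by ring
  rw [h1]
  have : ∑ a, (G.mulVec y) a * ∑ b, G⁻¹ a b * (G.mulVec y) b = L y := by
    rw [← h4]
    refine Finset.sum_congr rfl fun a _ => ?_
    rw [h2 a, h3]
  rw [this]

end MatrixIdent


/-- Second derivative test: at an interior local maximum, `φ'' ≤ 0`. -/
lemma second_deriv_test {φ φ' : ℝ → ℝ} {c : ℝ}
    (hmax : ∀ᶠ t in 𝓝 (0:ℝ), φ t ≤ φ 0)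
    (hd : ∀ᶠ t in 𝓝 (0:ℝ), HasDerivAt φ (φ' t) t)
    (hd2 : HasDerivAt φ' c 0) : c ≤ 0 := by
  by_contra hc
  push_neg at hc
  have hd0 : HasDerivAt φ (φ' 0) 0 := hd.self_of_nhds
  have h0 : φ' 0 = 0 := by
    rw [← hd0.deriv]
    exact IsLocalMax.deriv_eq_zero hmax
  -- slope of φ' tends to c > 0, so φ' > 0 on a right neighborhood
  have hslope : Filter.Tendsto (slope φ' 0) (𝓝[≠] (0:ℝ)) (𝓝 c) :=
    hasDerivAt_iff_tendsto_slope.mp hd2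
  have hslope' : ∀ᶠ t in 𝓝[>] (0:ℝ), 0 < slope φ' 0 t := by
    have : ∀ᶠ t in 𝓝[≠] (0:ℝ), 0 < slope φ' 0 t :=
      hslope.eventually (eventually_gt_nhds hc)
    exact Filter.Eventually.filter_mono (nhdsWithin_mono 0 fun t (ht : t ∈ Set.Ioi (0:ℝ)) =>
      (ne_of_gt ht : t ≠ 0)) this
  have hpos : ∀ᶠ t in 𝓝[>] (0:ℝ), 0 < φ' t := by
    filter_upwards [hslope', self_mem_nhdsWithin] with t hst (ht : 0 < t)
    have : slope φ' 0 t = φ' t / t := by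
      simp [slope, h0, div_eq_inv_mul]
    rw [this] at hst
    have := mul_pos hst ht
    rwa [div_mul_cancel₀ _ ht.ne'] at this
  have hpos' : ∀ᶠ t in 𝓝 (0:ℝ), 0 < t → 0 < φ' t := eventually_nhdsWithin_iff.mp hpos
  obtain ⟨ε, hε, hall⟩ := Metric.eventually_nhds_iff.mp (hpos'.and (hd.and hmax))
  set b := ε / 2 with hb
  have hbpos : 0 < b := by positivity
  have hbε : ∀ t ∈ Set.Icc (0:ℝ) b, dist t (0:ℝ) < ε := by
    intro t ht
    rw [Real.dist_eq, sub_zero, abs_of_nonneg ht.1]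
    calc t ≤ b := ht.2
    _ < ε := by rw [hb]; linarith
  have hmono : StrictMonoOn φ (Set.Icc (0:ℝ) b) := by
    apply strictMonoOn_of_deriv_pos (convex_Icc 0 b)
    · intro t ht
      exact ((hall (hbε t ht)).2.1).continuousAt.continuousWithinAt
    · intro t ht
      rw [interior_Icc] at ht
      have hd' := (hall (hbε t ⟨le_of_lt ht.1, le_of_lt ht.2⟩)).2.1
      rw [hd'.deriv]
      exact (hall (hbε t ⟨le_of_lt ht.1, le_of_lt ht.2⟩)).1 ht.1
  have h1 : φ 0 < φ b := hmono ⟨le_refl 0, hbpos.le⟩ ⟨hbpos.le, le_refl b⟩ hbpos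
  have h2 : φ b ≤ φ 0 := (hall (hbε b ⟨hbpos.le, le_refl b⟩)).2.2
  linarith


/-- At an interior maximum, the Hessian quadratic form is nonpositive. -/
lemma hess_nonpos {u : (Fin n → ℝ) → ℝ} (hu : ContDiffOn ℝ (⊤ : ℕ∞) u (U n))
    {z : Fin n → ℝ} (hz : z ∈ U n) (hmax : ∀ y ∈ U n, u y ≤ u z) (v : Fin n → ℝ) :
    ∑ a, ∑ b, v a * v b * pd (pd u a) b z ≤ 0 := by
  set ℓ : ℝ → (Fin n → ℝ) := fun t => z + t • v with hℓ
  have hℓd : ∀ t : ℝ, HasDerivAt ℓ v t := by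
    intro t
    simpa [hℓ] using ((hasDerivAt_id t).smul_const v).const_add z
  have hmem : ∀ᶠ t in 𝓝 (0:ℝ), ℓ t ∈ U n := by
    have hcont : Continuous ℓ := by fun_prop
    have : ℓ 0 ∈ U n := by simpa [hℓ] using hz
    exact hcont.continuousAt.eventually_mem (isOpenU.mem_nhds this)
  set φ : ℝ → ℝ := fun t => u (ℓ t) with hφ
  set φ' : ℝ → ℝ := fun t => ∑ a, v a * pd u a (ℓ t) with hφ'
  have hdφ : ∀ᶠ t in 𝓝 (0:ℝ), HasDerivAt φ (φ' t) t := by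
    filter_upwards [hmem] with t ht
    have h1 : HasDerivAt φ (fderiv ℝ u (ℓ t) v) t :=
      (diffAt hu ht).hasFDerivAt.comp_hasDerivAt t (hℓd t)
    have h2 : fderiv ℝ u (ℓ t) v = φ' t := fderiv_eq_sum_pd u (ℓ t) v
    rwa [h2] at h1
  -- second derivative
  set G : (Fin n → ℝ) → ℝ := fun y => ∑ a, v a * pd u a y with hG
  have hGd : HasFDerivAt G (∑ a, v a • fderiv ℝ (pd u a) z) z := by
    have : ∀ a : Fin n, a ∈ Finset.univ → HasFDerivAt (fun y => v a * pd u a y)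
        (v a • fderiv ℝ (pd u a) z) z := fun a _ =>
      (diffAt (pd_contDiffOn hu a) hz).hasFDerivAt.const_smul (v a)
    exact HasFDerivAt.fun_sum this
  have hℓ0 : ℓ 0 = z := by simp [hℓ]
  have hd2 : HasDerivAt φ' ((∑ a, v a • fderiv ℝ (pd u a) z) v) 0 := by
    have hGd' : HasFDerivAt G (∑ a, v a • fderiv ℝ (pd u a) z) (ℓ 0) := by
      rw [hℓ0]; exact hGd
    exact hGd'.comp_hasDerivAt (0:ℝ) (hℓd 0)
  have hc : (∑ a, v a • fderiv ℝ (pd u a) z) v = ∑ a, ∑ b, v a * v b * pd (pd u a) b z := by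
    rw [ContinuousLinearMap.sum_apply]
    refine Finset.sum_congr rfl fun a _ => ?_
    rw [ContinuousLinearMap.smul_apply, smul_eq_mul, fderiv_eq_sum_pd (pd u a) z v,
      Finset.mul_sum]
    refine Finset.sum_congr rfl fun b _ => ?_
    show v a * (v b * pd (pd u a) b z) = v a * v b * pd (pd u a) b z
    ring
  rw [hc] at hd2
  have hmax' : ∀ᶠ t in 𝓝 (0:ℝ), φ t ≤ φ 0 := by
    filter_upwards [hmem] with t ht
    rw [hφ]
    simp only
    rw [hℓ0]
    exact hmax (ℓ t) ht
  exact second_deriv_test hmax' hdφ hd2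

open scoped MatrixOrder in
open Matrix in
/-- Contraction of the (nonpositive) Hessian with the positive matrix `g⁻¹` is `≤ 0`. -/
lemma trace_hess_nonpos (L : (Fin n → ℝ) → ℝ) {u : (Fin n → ℝ) → ℝ}
    (hu : ContDiffOn ℝ (⊤ : ℕ∞) u (U n)) {z : Fin n → ℝ} (hz : z ∈ U n)
    (hmax : ∀ y ∈ U n, u y ≤ u z) (hg : (gmet L z).PosDef) :
    ∑ a, ∑ b, (gmet L z)⁻¹ a b * pd (pd u a) b z ≤ 0 := by
  have hginv : ((gmet L z)⁻¹).PosDef := hg.inv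
  set R := CFC.sqrt ((gmet L z)⁻¹) with hR
  have hRR : R * R = (gmet L z)⁻¹ := CFC.sqrt_mul_sqrt_self _ hginv.posSemidef.nonneg
  have hRsym : ∀ a k : Fin n, R a k = R k a := by
    intro a k
    have h2 : Rᴴ = R := (CFC.sqrt_nonneg _).posSemidef.1
    have h3 := congrFun (congrFun h2 a) k
    simpa [Matrix.conjTranspose_apply] using h3.symm
  have h1 : ∀ a b : Fin n, (gmet L z)⁻¹ a b = ∑ k, R k a * R k b := by
    intro a b
    rw [← hRR, Matrix.mul_apply]
    exact Finset.sum_congr rfl fun k _ => by rw [hRsym a k]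
  have key : ∑ a, ∑ b, (gmet L z)⁻¹ a b * pd (pd u a) b z
      = ∑ k, ∑ a, ∑ b, R k a * R k b * pd (pd u a) b z := by
    calc ∑ a, ∑ b, (gmet L z)⁻¹ a b * pd (pd u a) b z
        = ∑ a, ∑ b, ∑ k, R k a * R k b * pd (pd u a) b z := by
          refine Finset.sum_congr rfl fun a _ => Finset.sum_congr rfl fun b _ => ?_
          rw [h1 a b, Finset.sum_mul]
      _ = ∑ a, ∑ k, ∑ b, R k a * R k b * pd (pd u a) b z := by
          exact Finset.sum_congr rfl fun a _ => Finset.sum_comm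
      _ = ∑ k, ∑ a, ∑ b, R k a * R k b * pd (pd u a) b z := Finset.sum_comm
  rw [key]
  apply Finset.sum_nonpos
  intro k _
  simpa using hess_nonpos hu hz hmax (fun i => R k i)


section Psi

variable {L : (Fin n → ℝ) → ℝ}

lemma psi_hasFDerivAt (hL : ContDiffOn ℝ (⊤ : ℕ∞) L (U n)) (hLhom : PosHom 2 (U n) L)
    (hgpos : ∀ y : Fin n → ℝ, y ≠ 0 → (gmet L y).PosDef)
    {y : Fin n → ℝ} (hy : y ∈ U n) (γ : ℝ) :
    HasFDerivAt (fun z => L z ^ γ) ((γ * L y ^ (γ - 1)) • fderiv ℝ L y) y := by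
  have hp := L_pos L hL hLhom hgpos hy
  have h1 : HasDerivAt (fun x : ℝ => x ^ γ) (γ * L y ^ (γ - 1)) (L y) :=
    Real.hasDerivAt_rpow_const (Or.inl hp.ne')
  exact h1.comp_hasFDerivAt y (diffAt hL hy).hasFDerivAt

lemma pd_psi (hL : ContDiffOn ℝ (⊤ : ℕ∞) L (U n)) (hLhom : PosHom 2 (U n) L)
    (hgpos : ∀ y : Fin n → ℝ, y ≠ 0 → (gmet L y).PosDef)
    {y : Fin n → ℝ} (hy : y ∈ U n) (γ : ℝ) (a : Fin n) :
    pd (fun z => L z ^ γ) a y = γ * L y ^ (γ - 1) * pd L a y := by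
  have h := (psi_hasFDerivAt hL hLhom hgpos hy γ).fderiv
  simp only [pd, h, ContinuousLinearMap.coe_smul', Pi.smul_apply, smul_eq_mul]

lemma psi_contDiffOn (hL : ContDiffOn ℝ (⊤ : ℕ∞) L (U n)) (hLhom : PosHom 2 (U n) L)
    (hgpos : ∀ y : Fin n → ℝ, y ≠ 0 → (gmet L y).PosDef) (γ : ℝ) :
    ContDiffOn ℝ (⊤ : ℕ∞) (fun z => L z ^ γ) (U n) :=
  fun y hy => (hL y hy).rpow_const_of_ne (L_pos L hL hLhom hgpos hy).ne'

lemma pd_pd_psi (hL : ContDiffOn ℝ (⊤ : ℕ∞) L (U n)) (hLhom : PosHom 2 (U n) L)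
    (hgpos : ∀ y : Fin n → ℝ, y ≠ 0 → (gmet L y).PosDef)
    {y : Fin n → ℝ} (hy : y ∈ U n) (γ : ℝ) (a b : Fin n) :
    pd (pd (fun z => L z ^ γ) a) b y
      = γ * L y ^ (γ - 1) * pd (pd L a) b y
        + γ * (γ - 1) * L y ^ (γ - 2) * pd L a y * pd L b y := by
  have heqv : (fun z => γ * L z ^ (γ - 1) * pd L a z)
      =ᶠ[𝓝 y] pd (fun z => L z ^ γ) a := by
    filter_upwards [isOpenU.mem_nhds hy] with z hz
    exact (pd_psi hL hLhom hgpos hz γ a).symm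
  have hA : HasFDerivAt (fun z => L z ^ (γ - 1))
      (((γ - 1) * L y ^ (γ - 1 - 1)) • fderiv ℝ L y) y :=
    psi_hasFDerivAt hL hLhom hgpos hy (γ - 1)
  have hB : HasFDerivAt (pd L a) (fderiv ℝ (pd L a) y) y :=
    (diffAt (pd_contDiffOn hL a) hy).hasFDerivAt
  have hAB := (hA.mul hB).const_smul (c := γ)
  have hd : HasFDerivAt (fun z => γ * L z ^ (γ - 1) * pd L a z)
      (γ • ((L y ^ (γ - 1)) • fderiv ℝ (pd L a) y
        + (pd L a y) • (((γ - 1) * L y ^ (γ - 1 - 1)) • fderiv ℝ L y))) y := by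
    refine HasFDerivAt.congr_of_eventuallyEq hAB ?_
    filter_upwards with z
    show γ * L z ^ (γ - 1) * pd L a z = γ * (L z ^ (γ - 1) * pd L a z)
    ring
  have hfder : fderiv ℝ (pd (fun z => L z ^ γ) a) y
      = γ • ((L y ^ (γ - 1)) • fderiv ℝ (pd L a) y
        + (pd L a y) • (((γ - 1) * L y ^ (γ - 1 - 1)) • fderiv ℝ L y)) := by
    rw [← Filter.EventuallyEq.fderiv_eq heqv]
    exact hd.fderiv
  have hgg : γ - 1 - 1 = γ - 2 := by ring
  show fderiv ℝ (pd (fun z => L z ^ γ) a) y (Pi.single b 1) = _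
  rw [hfder]
  simp only [ContinuousLinearMap.coe_smul', Pi.smul_apply, ContinuousLinearMap.add_apply,
    smul_eq_mul, hgg]
  show γ * (L y ^ (γ - 1) * pd (pd L a) b y + pd L a y * ((γ - 1) * L y ^ (γ - 2) * pd L b y)) = _
  ring

/-- The key PDE identity for `ψ = L^γ`:  `L g^{ab} ψ_{·a·b} = (2nγ + 4γ(γ-1)) ψ`. -/
lemma psi_pde (hL : ContDiffOn ℝ (⊤ : ℕ∞) L (U n)) (hLhom : PosHom 2 (U n) L)
    (hgpos : ∀ y : Fin n → ℝ, y ≠ 0 → (gmet L y).PosDef)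
    {y : Fin n → ℝ} (hy : y ∈ U n) (γ : ℝ) :
    L y * ∑ a, ∑ b, (gmet L y)⁻¹ a b * pd (pd (fun z => L z ^ γ) a) b y
      = (2 * n * γ + 4 * γ * (γ - 1)) * L y ^ γ := by
  have hp := L_pos L hL hLhom hgpos hy
  have hsplit : ∑ a, ∑ b, (gmet L y)⁻¹ a b * pd (pd (fun z => L z ^ γ) a) b y
      = γ * L y ^ (γ - 1) * (∑ a, ∑ b, (gmet L y)⁻¹ a b * pd (pd L a) b y)
        + γ * (γ - 1) * L y ^ (γ - 2)
          * (∑ a, ∑ b, (gmet L y)⁻¹ a b * pd L a y * pd L b y) := by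
    rw [Finset.mul_sum, Finset.mul_sum, ← Finset.sum_add_distrib]
    refine Finset.sum_congr rfl fun a _ => ?_
    rw [Finset.mul_sum, Finset.mul_sum, ← Finset.sum_add_distrib]
    refine Finset.sum_congr rfl fun b _ => ?_
    rw [pd_pd_psi hL hLhom hgpos hy γ a b]
    ring
  rw [hsplit, trace_ident L (hgpos y hy), grad_ident L hL hLhom hy (hgpos y hy)]
  have e1 : L y ^ (γ - 1) * L y = L y ^ γ := by
    rw [← Real.rpow_add_one hp.ne' (γ - 1)]
    norm_num
  have e2 : L y ^ (γ - 2) * L y * L y = L y ^ γ := by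
    rw [← Real.rpow_add_one hp.ne' (γ - 2), ← Real.rpow_add_one hp.ne' (γ - 2 + 1)]
    congr 1
    ring
  calc L y * (γ * L y ^ (γ - 1) * (2 * n) + γ * (γ - 1) * L y ^ (γ - 2) * (4 * L y))
      = (2 * n * γ) * (L y ^ (γ - 1) * L y)
        + (4 * γ * (γ - 1)) * (L y ^ (γ - 2) * L y * L y) := by ring
    _ = (2 * n * γ + 4 * γ * (γ - 1)) * L y ^ γ := by rw [e1, e2]; ring

end Psi


/-- Key estimate: any homogeneous solution is `≤ 0`. -/
lemma key {n : ℕ} (hn : 2 ≤ n) (L : (Fin n → ℝ) → ℝ)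
    (hLsmooth : ContDiffOn ℝ (⊤ : ℕ∞) L {y : Fin n → ℝ | y ≠ 0})
    (hLhom : PosHom 2 {y : Fin n → ℝ | y ≠ 0} L)
    (hgpos : ∀ y : Fin n → ℝ, y ≠ 0 → (gmet L y).PosDef)
    (α κ : ℝ) (hκ : α * (α + (n : ℝ) - 2) < κ)
    (f : (Fin n → ℝ) → ℝ)
    (hfsmooth : ContDiffOn ℝ (⊤ : ℕ∞) f {y : Fin n → ℝ | y ≠ 0})
    (hfhom : PosHom α {y : Fin n → ℝ | y ≠ 0} f)
    (heq : ∀ y : Fin n → ℝ, y ≠ 0 →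
      κ * f y - L y * ∑ a, ∑ b, ginv L y a b * pd (pd f a) b y = 0) :
    ∀ y : Fin n → ℝ, y ≠ 0 → f y ≤ 0 := by
  set β : ℝ := α / 2 with hβ
  set Ψ : (Fin n → ℝ) → ℝ := fun z => L z ^ β with hΨ
  have hΨsmooth : ContDiffOn ℝ (⊤ : ℕ∞) Ψ (U n) :=
    psi_contDiffOn hLsmooth hLhom hgpos β
  have hLposU : ∀ {w : Fin n → ℝ}, w ∈ U n → 0 < L w :=
    fun {w} hw => L_pos L hLsmooth hLhom hgpos hw
  have hΨpos : ∀ {w : Fin n → ℝ}, w ∈ U n → 0 < Ψ w :=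
    fun {w} hw => Real.rpow_pos_of_pos (hLposU hw) β
  -- the sphere
  have hnpos : 0 < n := by omega
  have hS : Metric.sphere (0 : Fin n → ℝ) 1 ⊆ U n := by
    intro z hz
    have : ‖z‖ = 1 := mem_sphere_zero_iff_norm.mp hz
    intro h0
    rw [h0] at this
    simp at this
  have hsphere_ne : (Pi.single (⟨0, hnpos⟩ : Fin n) (1:ℝ)) ∈ Metric.sphere (0 : Fin n → ℝ) 1 := by
    rw [mem_sphere_zero_iff_norm]
    rw [Pi.norm_single]
    norm_num
  have hcont : ContinuousOn (fun z => f z / Ψ z) (Metric.sphere (0 : Fin n → ℝ) 1) := by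
    apply ContinuousOn.div
    · exact (hfsmooth.continuousOn).mono hS
    · exact (hΨsmooth.continuousOn).mono hS
    · exact fun z hz => (hΨpos (hS hz)).ne'
  obtain ⟨z₀, hz₀S, hmax'⟩ := (isCompact_sphere (0 : Fin n → ℝ) 1).exists_isMaxOn
    ⟨_, hsphere_ne⟩ hcont
  have hmax : ∀ z ∈ Metric.sphere (0 : Fin n → ℝ) 1, f z / Ψ z ≤ f z₀ / Ψ z₀ :=
    fun z hz => hmax' hz
  have hz₀ : z₀ ∈ U n := hS hz₀S
  set M : ℝ := f z₀ / Ψ z₀ with hM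
  have hfz₀ : f z₀ = M * Ψ z₀ := by
    rw [hM, div_mul_cancel₀ _ (hΨpos hz₀).ne']
  -- global bound
  have hbound : ∀ y ∈ U n, f y ≤ M * Ψ y := by
    intro y hy
    set t : ℝ := ‖y‖ with ht
    have htpos : 0 < t := norm_pos_iff.mpr hy
    set z : Fin n → ℝ := t⁻¹ • y with hz
    have hznorm : ‖z‖ = 1 := by
      rw [hz, norm_smul, norm_inv, norm_norm, ← ht, inv_mul_cancel₀ htpos.ne']
    have hzS : z ∈ Metric.sphere (0 : Fin n → ℝ) 1 := mem_sphere_zero_iff_norm.mpr hznorm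
    have hzU : z ∈ U n := hS hzS
    have hyz : y = t • z := by
      rw [hz, smul_inv_smul₀ htpos.ne']
    have hfy : f y = t ^ α * f z := by
      conv_lhs => rw [hyz]
      exact hfhom z hzU t htpos
    have hLy : L y = t ^ (2:ℝ) * L z := by
      conv_lhs => rw [hyz]
      exact hLhom z hzU t htpos
    have hfzle : f z ≤ M * Ψ z := by
      have := hmax z hzS
      rwa [div_le_iff₀ (hΨpos hzU)] at this
    have hΨy : Ψ y = (t ^ α) * Ψ z := by
      rw [hΨ]
      simp only
      rw [hLy, Real.mul_rpow (Real.rpow_nonneg htpos.le 2) (hLposU hzU).le,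
        ← Real.rpow_mul htpos.le 2 β]
      have h2β : (2:ℝ) * β = α := by rw [hβ]; ring
      rw [h2β]
    calc f y = t ^ α * f z := hfy
      _ ≤ t ^ α * (M * Ψ z) := by
          exact mul_le_mul_of_nonneg_left hfzle (Real.rpow_nonneg htpos.le α)
      _ = M * Ψ y := by rw [hΨy]; ring
  -- the auxiliary function u
  set u : (Fin n → ℝ) → ℝ := fun y => f y - M * Ψ y with hu
  have husmooth : ContDiffOn ℝ (⊤ : ℕ∞) u (U n) :=
    hfsmooth.sub (contDiffOn_const.mul hΨsmooth)
  have humax : ∀ y ∈ U n, u y ≤ u z₀ := by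
    intro y hy
    have h1 : u z₀ = 0 := by rw [hu]; simp only; rw [hfz₀]; ring
    rw [h1, hu]
    simp only
    linarith [hbound y hy]
  have htrace := trace_hess_nonpos L husmooth hz₀ humax (hgpos z₀ hz₀)
  -- decomposition of second derivatives at z₀
  have hpdu : ∀ w ∈ U n, ∀ a, pd u a w = pd f a w - M * pd Ψ a w := by
    intro w hw a
    have hdf := diffAt hfsmooth hw
    have hdΨ := (diffAt hΨsmooth hw).const_mul M
    simp only [pd, hu]
    rw [fderiv_fun_sub hdf hdΨ, fderiv_const_mul (diffAt hΨsmooth hw) M]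
    simp
  have hdecomp : ∀ a b, pd (pd u a) b z₀ = pd (pd f a) b z₀ - M * pd (pd Ψ a) b z₀ := by
    intro a b
    have heqv : (fun w => pd f a w - M * pd Ψ a w) =ᶠ[𝓝 z₀] pd u a := by
      filter_upwards [isOpenU.mem_nhds hz₀] with w hw
      exact (hpdu w hw a).symm
    have hdfa := diffAt (pd_contDiffOn hfsmooth a) hz₀
    have hdΨa := diffAt (pd_contDiffOn hΨsmooth a) hz₀
    show fderiv ℝ (pd u a) z₀ (Pi.single b 1) = _
    rw [← Filter.EventuallyEq.fderiv_eq heqv]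
    rw [fderiv_fun_sub hdfa (hdΨa.const_mul M), fderiv_const_mul hdΨa M]
    simp [pd]
  -- assemble
  have hsum : ∑ a, ∑ b, (gmet L z₀)⁻¹ a b * pd (pd f a) b z₀
      = (∑ a, ∑ b, (gmet L z₀)⁻¹ a b * pd (pd u a) b z₀)
        + M * ∑ a, ∑ b, (gmet L z₀)⁻¹ a b * pd (pd Ψ a) b z₀ := by
    rw [Finset.mul_sum, ← Finset.sum_add_distrib]
    refine Finset.sum_congr rfl fun a _ => ?_
    rw [Finset.mul_sum, ← Finset.sum_add_distrib]
    refine Finset.sum_congr rfl fun b _ => ?_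
    rw [hdecomp a b]
    ring
  have hpde := psi_pde hLsmooth hLhom hgpos hz₀ β
  have heq' := heq z₀ hz₀
  have hgeq : ∀ a b, ginv L z₀ a b = (gmet L z₀)⁻¹ a b := fun a b => rfl
  simp only [ginv] at heq'
  rw [hsum, hfz₀] at heq'
  -- κ * (M Ψ) - L*(A + M*T) = 0, L*T = c * Ψ
  have hc : 2 * (n:ℝ) * β + 4 * β * (β - 1) = α * (α + (n:ℝ) - 2) := by
    rw [hβ]; ring
  have hLA : L z₀ * (∑ a, ∑ b, (gmet L z₀)⁻¹ a b * pd (pd u a) b z₀) ≤ 0 :=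
    mul_nonpos_of_nonneg_of_nonpos (hLposU hz₀).le htrace
  rw [← hΨ] at hpde
  have hT : L z₀ * ∑ a, ∑ b, (gmet L z₀)⁻¹ a b * pd (pd Ψ a) b z₀
      = α * (α + (n:ℝ) - 2) * Ψ z₀ := by
    rw [hpde, hc]
  have h4 : (κ - α * (α + (n:ℝ) - 2)) * M * Ψ z₀
      = L z₀ * ∑ a, ∑ b, (gmet L z₀)⁻¹ a b * pd (pd u a) b z₀ := by
    linear_combination heq' + M * hT
  have hMle : M ≤ 0 := by
    by_contra hM0
    push_neg at hM0
    have hpos := mul_pos (mul_pos (sub_pos.mpr hκ) hM0) (hΨpos hz₀)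
    rw [h4] at hpos
    linarith
  intro y hy
  have := hbound y hy
  have h2 : M * Ψ y ≤ 0 := mul_nonpos_of_nonpos_of_nonneg hMle (hΨpos hy).le
  linarith

end MPF

/-- **Lemma 5.12, case (B).** Let `L` be a fiberwise Finsler datum on `ℝ^n ∖ {0}` (smooth,
positively 2-homogeneous, with positive definite fundamental tensor) and `κ > α(α+n−2)`.
Any smooth positively `α`-homogeneous solution `f` of `κ f − L g^{ab} f_{·a·b} = 0` on
`ℝ^n ∖ {0}` vanishes identically. -/
theorem maximum_principle_finsler_case
    {n : ℕ} (hn : 2 ≤ n) (L : (Fin n → ℝ) → ℝ)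
    (hLsmooth : ContDiffOn ℝ (⊤ : ℕ∞) L {y : Fin n → ℝ | y ≠ 0})
    (hLhom : PosHom 2 {y : Fin n → ℝ | y ≠ 0} L)
    (hgpos : ∀ y : Fin n → ℝ, y ≠ 0 → (gmet L y).PosDef)
    (α κ : ℝ) (hκ : α * (α + (n : ℝ) - 2) < κ)
    (f : (Fin n → ℝ) → ℝ)
    (hfsmooth : ContDiffOn ℝ (⊤ : ℕ∞) f {y : Fin n → ℝ | y ≠ 0})
    (hfhom : PosHom α {y : Fin n → ℝ | y ≠ 0} f)
    (heq : ∀ y : Fin n → ℝ, y ≠ 0 →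
      κ * f y - L y * ∑ a, ∑ b, ginv L y a b * pd (pd f a) b y = 0) :
    ∀ y : Fin n → ℝ, y ≠ 0 → f y = 0 := by
  intro y hy
  have h1 := MPF.key hn L hLsmooth hLhom hgpos α κ hκ f hfsmooth hfhom heq y hy
  have hnegsmooth : ContDiffOn ℝ (⊤ : ℕ∞) (fun z => -f z) {y : Fin n → ℝ | y ≠ 0} :=
    hfsmooth.neg
  have hneghom : PosHom α {y : Fin n → ℝ | y ≠ 0} (fun z => -f z) := by
    intro z hz t ht
    simp only [hfhom z hz t ht]
    ring
  have hpdneg : ∀ a : Fin n, pd (fun z => -f z) a = fun w => -pd f a w := by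
    intro a; funext w; simp [pd, fderiv_neg]
  have hpdpdneg : ∀ (a b : Fin n) (w : Fin n → ℝ),
      pd (pd (fun z => -f z) a) b w = -pd (pd f a) b w := by
    intro a b w
    rw [hpdneg a]
    simp only [pd, fderiv_fun_neg]
    rfl
  have hneq : ∀ z : Fin n → ℝ, z ≠ 0 →
      κ * (-f z) - L z * ∑ a, ∑ b, ginv L z a b * pd (pd (fun z => -f z) a) b z = 0 := by
    intro z hz
    have hsum : ∑ a, ∑ b, ginv L z a b * pd (pd (fun z => -f z) a) b z
        = -∑ a, ∑ b, ginv L z a b * pd (pd f a) b z := by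
      rw [← Finset.sum_neg_distrib]
      refine Finset.sum_congr rfl fun a _ => ?_
      rw [← Finset.sum_neg_distrib]
      refine Finset.sum_congr rfl fun b _ => ?_
      rw [hpdpdneg a b z]
      ring
    rw [hsum]
    have := heq z hz
    linarith
  have h2 := MPF.key hn L hLsmooth hLhom hgpos α κ hκ (fun z => -f z)
    hnegsmooth hneghom hneq y hy
  simp only [neg_nonpos] at h2
  linarith
end
end

section
/- Fiberwise form of Thm. 5.17 (vanishing of the Ricci scalar): Let n ≥ 2 and let (C, L) be a properly Lorentz fiberwise datum on ℝ^n, and let κ ∈ ℝ with κ ≠ 0 and κ < 2n. If f is smooth and positively 2-homogeneous on an open conic neighborhood of C̄ and satisfies κ f − L g^{ab} f_{·a·b} = 0 on C, then f = 0 on C̄. In particular, for n ≥ 3, any such f satisfying the Finslerian metric variational equation (n+2) f − L g^{ab} f_{·a·b} = 0 on C vanishes identically; applied to f = Ric, the Ricci scalar of any nonlinear connection smoothly extendible to the boundary, this yields Theorem C of the paper. -/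
open scoped BigOperators

noncomputable section

/-- Lowered index `y_i = g_{ia} y^a`. -/
def yLow {n : ℕ} (L : (Fin n → ℝ) → ℝ) (y : Fin n → ℝ) (i : Fin n) : ℝ :=
  ∑ a, gmet L y i a * y a

/-- Cartan tensor `C_{ijk} = (1/2) g_{ij·k}`. -/
def cartan {n : ℕ} (L : (Fin n → ℝ) → ℝ) (i j k : Fin n) : (Fin n → ℝ) → ℝ :=
  fun y => (1 / 2) * pd (fun z => gmet L z i j) k y

/-- Mean Cartan tensor `C_i = g^{ab} C_{abi}`. -/
def meanCartan {n : ℕ} (L : (Fin n → ℝ) → ℝ) (i : Fin n) : (Fin n → ℝ) → ℝ :=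
  fun y => ∑ a, ∑ b, ginv L y a b * cartan L a b i y

/-- A fiberwise pseudo-Finsler datum on `ℝ^n`. -/
structure FinslerDatum (n : ℕ) (C : Set (Fin n → ℝ)) (L : (Fin n → ℝ) → ℝ) : Prop where
  openC : IsOpen C
  nzC : ∀ y ∈ C, y ≠ 0
  conicC : Conic C
  smoothL : ContDiffOn ℝ (⊤ : ℕ∞) L C
  homL : PosHom 2 C L
  LneC : ∀ y ∈ C, L y ≠ 0
  gInvC : ∀ y ∈ C, IsUnit (gmet L y).det

/-- Closure of `C` inside `ℝ^n ∖ {0}`. -/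
def clos {n : ℕ} (C : Set (Fin n → ℝ)) : Set (Fin n → ℝ) := closure C \ {0}

/-- A proper fiberwise datum on `ℝ^n`. -/
structure ProperDatum (n : ℕ) (C U : Set (Fin n → ℝ)) (L : (Fin n → ℝ) → ℝ) : Prop where
  connC : IsConnected C
  openC : IsOpen C
  conicC : Conic C
  nzC : ∀ y ∈ C, y ≠ 0
  openU : IsOpen U
  conicU : Conic U
  nzU : ∀ y ∈ U, y ≠ 0
  closSub : clos C ⊆ U
  smoothL : ContDiffOn ℝ (⊤ : ℕ∞) L U
  homL : PosHom 2 U L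
  posC : ∀ y ∈ C, 0 < L y
  zeroBd : ∀ y ∈ clos C \ C, L y = 0
  gInvU : ∀ y ∈ U, IsUnit (gmet L y).det

/-- Lorentzian signature `(+,−,…,−)` of a symmetric matrix, via Sylvester normal form. -/
def LorentzSignature {n : ℕ} (g : Matrix (Fin n) (Fin n) ℝ) : Prop :=
  ∃ P : Matrix (Fin n) (Fin n) ℝ, IsUnit P.det ∧
    P.transpose * g * P = Matrix.diagonal (fun i : Fin n => if (i : ℕ) = 0 then (1 : ℝ) else -1)

/-- A properly Lorentz fiberwise datum on `ℝ^n`. -/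
structure LorentzDatum (n : ℕ) (C U : Set (Fin n → ℝ)) (L : (Fin n → ℝ) → ℝ)
    extends ProperDatum n C U L : Prop where
  lorentz : ∀ y ∈ clos C, LorentzSignature (gmet L y)
  halfspace : ∃ φ : (Fin n → ℝ) →ₗ[ℝ] ℝ, φ ≠ 0 ∧ ∀ v ∈ clos C, 0 < φ v

/-- `σ^Z = y_a Z^a / L`. -/
def sigmaZ {n : ℕ} (L : (Fin n → ℝ) → ℝ) (Z : (Fin n → ℝ) → Fin n → ℝ) :
    (Fin n → ℝ) → ℝ :=
  fun y => (∑ a, yLow L y a * Z y a) / L y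

/-- `K^Z_i = −(2/(n+2)) (2 C_{a·i} Z^a + C_a Z^a_{·i})`. -/
def Kten {n : ℕ} (L : (Fin n → ℝ) → ℝ) (Z : (Fin n → ℝ) → Fin n → ℝ) (i : Fin n) :
    (Fin n → ℝ) → ℝ :=
  fun y => -(2 / ((n : ℝ) + 2)) *
    (2 * ∑ a, pd (meanCartan L a) i y * Z y a + ∑ a, meanCartan L a y * pd (fun z => Z z a) i y)


/-! ### Auxiliary development -/

section AuxCalc

variable {n : ℕ}

lemma infty_add_one : ((⊤ : ℕ∞) : WithTop ℕ∞) + 1 ≤ ((⊤ : ℕ∞) : WithTop ℕ∞) := by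
  rfl

lemma one_le_infty : (1 : WithTop ℕ∞) ≤ ((⊤ : ℕ∞) : WithTop ℕ∞) := by
  exact_mod_cast le_top

lemma diffAt_of_contDiffOn {f : (Fin n → ℝ) → ℝ} {O : Set (Fin n → ℝ)}
    (hf : ContDiffOn ℝ (⊤ : ℕ∞) f O) (hO : IsOpen O) {y : Fin n → ℝ} (hy : y ∈ O) :
    DifferentiableAt ℝ f y :=
  (hf.differentiableOn (by simp)).differentiableAt (hO.mem_nhds hy)

lemma pd_congr_of_isOpen {f g : (Fin n → ℝ) → ℝ} {O : Set (Fin n → ℝ)} (hO : IsOpen O)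
    (h : ∀ z ∈ O, f z = g z) {y : Fin n → ℝ} (hy : y ∈ O) (i : Fin n) :
    pd f i y = pd g i y := by
  have hev : f =ᶠ[nhds y] g := Filter.eventuallyEq_of_mem (hO.mem_nhds hy) h
  simp only [pd, hev.fderiv_eq]

lemma contDiffOn_pd {f : (Fin n → ℝ) → ℝ} {O : Set (Fin n → ℝ)}
    (hf : ContDiffOn ℝ (⊤ : ℕ∞) f O) (hO : IsOpen O) (i : Fin n) :
    ContDiffOn ℝ (⊤ : ℕ∞) (pd f i) O := by
  have h1 : ContDiffOn ℝ (⊤ : ℕ∞) (fderiv ℝ f) O := hf.fderiv_of_isOpen hO infty_add_one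
  exact h1.clm_apply contDiffOn_const

lemma diffAt_pd {f : (Fin n → ℝ) → ℝ} {O : Set (Fin n → ℝ)}
    (hf : ContDiffOn ℝ (⊤ : ℕ∞) f O) (hO : IsOpen O) {y : Fin n → ℝ} (hy : y ∈ O) (i : Fin n) :
    DifferentiableAt ℝ (pd f i) y :=
  diffAt_of_contDiffOn (contDiffOn_pd hf hO i) hO hy

lemma pd_mul {u v : (Fin n → ℝ) → ℝ} {y : Fin n → ℝ}
    (hu : DifferentiableAt ℝ u y) (hv : DifferentiableAt ℝ v y) (i : Fin n) :
    pd (fun z => u z * v z) i y = pd u i y * v y + u y * pd v i y := by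
  simp only [pd, fderiv_fun_mul hu hv, ContinuousLinearMap.add_apply,
    ContinuousLinearMap.smul_apply, smul_eq_mul]
  ring

lemma pd_neg {u : (Fin n → ℝ) → ℝ} (i : Fin n) (y : Fin n → ℝ) :
    pd (fun z => -u z) i y = -pd u i y := by
  simp [pd, fderiv_neg]

/-- Euler's identity for positively homogeneous functions. -/
lemma euler_fderiv {O : Set (Fin n → ℝ)} (hO : IsOpen O)
    {f : (Fin n → ℝ) → ℝ} (hf : ContDiffOn ℝ (⊤ : ℕ∞) f O) {α : ℝ}
    (hhom : PosHom α O f) {y : Fin n → ℝ} (hy : y ∈ O) :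
    fderiv ℝ f y y = α * f y := by
  have hdf : DifferentiableAt ℝ f y := diffAt_of_contDiffOn hf hO hy
  have hdc : HasDerivAt (fun t : ℝ => t • y) y 1 := by
    simpa using (hasDerivAt_id (1:ℝ)).smul_const y
  have h1 : HasDerivAt (fun t : ℝ => f (t • y)) (fderiv ℝ f y y) 1 := by
    have hdf' : HasFDerivAt f (fderiv ℝ f y) ((1:ℝ) • y) := by
      simpa using hdf.hasFDerivAt
    exact hdf'.comp_hasDerivAt (1:ℝ) hdc
  have h2 : HasDerivAt (fun t : ℝ => t ^ α * f y) (α * f y) 1 := by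
    have := (Real.hasDerivAt_rpow_const (x := (1:ℝ)) (p := α) (Or.inl one_ne_zero)).mul_const (f y)
    simpa using this
  have hev : (fun t : ℝ => t ^ α * f y) =ᶠ[nhds (1:ℝ)] fun t : ℝ => f (t • y) := by
    have hpos : ∀ᶠ t : ℝ in nhds 1, 0 < t :=
      Filter.tendsto_id.eventually_const_lt (by norm_num)
    filter_upwards [hpos] with t ht
    exact (hhom y hy t ht).symm
  have h3 : HasDerivAt (fun t : ℝ => f (t • y)) (α * f y) 1 := h2.congr_of_eventuallyEq hev.symm
  exact h1.unique h3


lemma fderiv_smul_arg {f : (Fin n → ℝ) → ℝ} {y : Fin n → ℝ} {t : ℝ}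
    (hf : DifferentiableAt ℝ f (t • y)) :
    fderiv ℝ (fun z => f (t • z)) y = t • fderiv ℝ f (t • y) := by
  have hm : (fun z : Fin n → ℝ => t • z) = fun z => (t • ContinuousLinearMap.id ℝ (Fin n → ℝ)) z := by
    funext z; simp
  have h := fderiv_comp (𝕜 := ℝ) y (g := f)
      (f := fun z : Fin n → ℝ => t • z) hf ?hd
  · have hce : (fun z : Fin n → ℝ => f (t • z)) = f ∘ (fun z => t • z) := rfl
    rw [hce, h]
    have h2 : fderiv ℝ (fun z : Fin n → ℝ => t • z) y
        = t • ContinuousLinearMap.id ℝ (Fin n → ℝ) := by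
      rw [hm]; exact ContinuousLinearMap.fderiv _
    ext v
    simp [h2]
  case hd =>
    rw [hm]; exact (t • ContinuousLinearMap.id ℝ (Fin n → ℝ)).differentiableAt

lemma posHom_pd {O : Set (Fin n → ℝ)} (hO : IsOpen O) (hcon : Conic O)
    {f : (Fin n → ℝ) → ℝ} (hf : ContDiffOn ℝ (⊤ : ℕ∞) f O) {α : ℝ}
    (hhom : PosHom α O f) (i : Fin n) : PosHom (α - 1) O (pd f i) := by
  intro y hy t ht
  have hty : t • y ∈ O := hcon hy ht
  have h1 : fderiv ℝ (fun z => f (t • z)) y = t • fderiv ℝ f (t • y) :=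
    fderiv_smul_arg (diffAt_of_contDiffOn hf hO hty)
  have h2 : fderiv ℝ (fun z => t ^ α * f z) y = t ^ α • fderiv ℝ f y :=
    fderiv_const_mul (diffAt_of_contDiffOn hf hO hy) _
  have hcongr : fderiv ℝ (fun z => f (t • z)) y = fderiv ℝ (fun z => t ^ α * f z) y := by
    apply Filter.EventuallyEq.fderiv_eq
    filter_upwards [hO.mem_nhds hy] with z hz
    exact hhom z hz t ht
  have h3 : t • fderiv ℝ f (t • y) = t ^ α • fderiv ℝ f y := by rw [← h1, hcongr, h2]
  have h4 : t * pd f i (t • y) = t ^ α * pd f i y := by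
    have := congrArg (fun (Φ : (Fin n → ℝ) →L[ℝ] ℝ) => Φ (Pi.single i 1)) h3
    simpa [pd] using this
  have : pd f i (t • y) = t ^ α / t * pd f i y := by
    field_simp at h4 ⊢
    linarith [h4]
  rw [this, Real.rpow_sub ht, Real.rpow_one]

lemma euler_sum {O : Set (Fin n → ℝ)} (hO : IsOpen O)
    {f : (Fin n → ℝ) → ℝ} (hf : ContDiffOn ℝ (⊤ : ℕ∞) f O) {α : ℝ}
    (hhom : PosHom α O f) {y : Fin n → ℝ} (hy : y ∈ O) :
    ∑ a, y a * pd f a y = α * f y := by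
  have h := euler_fderiv hO hf hhom hy
  have hrep : (fderiv ℝ f y) y = ∑ a, y a * pd f a y := by
    have hsum : (∑ a, y a • (Pi.single a (1:ℝ) : Fin n → ℝ)) = y := by
      ext j
      simp [Pi.single_apply]
    calc (fderiv ℝ f y) y
        = (fderiv ℝ f y) (∑ a, y a • (Pi.single a (1:ℝ) : Fin n → ℝ)) := by rw [hsum]
      _ = ∑ a, y a * pd f a y := by
          rw [map_sum]
          congr 1; funext a
          simp [pd]
  rw [← hrep, h]

lemma gmet_contract {O : Set (Fin n → ℝ)} (hO : IsOpen O) (hcon : Conic O)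
    {L : (Fin n → ℝ) → ℝ} (hL : ContDiffOn ℝ (⊤ : ℕ∞) L O)
    (hhom : PosHom 2 O L) {y : Fin n → ℝ} (hy : y ∈ O) :
    ∑ a, ∑ b, y a * y b * gmet L y a b = L y := by
  have h1 : ∀ a, PosHom 1 O (pd L a) := by
    intro a
    have := posHom_pd hO hcon hL hhom a
    norm_num at this
    exact this
  have h2 : ∀ a, ∑ b, y b * pd (pd L a) b y = pd L a y := by
    intro a
    have := euler_sum hO (contDiffOn_pd hL hO a) (h1 a) hy
    simpa using this
  have h3 : ∑ a, y a * pd L a y = 2 * L y := by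
    simpa using euler_sum hO hL hhom hy
  have : ∑ a, ∑ b, y a * y b * gmet L y a b
      = (1/2) * ∑ a, y a * ∑ b, y b * pd (pd L a) b y := by
    rw [Finset.mul_sum]
    congr 1; funext a
    rw [Finset.mul_sum, Finset.mul_sum]
    congr 1; funext b
    simp [gmet]
    ring
  rw [this]
  conv_lhs => rw [show (∑ a, y a * ∑ b, y b * pd (pd L a) b y) = ∑ a, y a * pd L a y by
    exact Finset.sum_congr rfl fun a _ => by rw [h2 a]]
  rw [h3]; ring


section Hessian

variable {w : (Fin n → ℝ) → ℝ} {O : Set (Fin n → ℝ)}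

lemma diffAt_fderiv (hw : ContDiffOn ℝ (⊤ : ℕ∞) w O) (hO : IsOpen O)
    {y0 : Fin n → ℝ} (hy0 : y0 ∈ O) : DifferentiableAt ℝ (fderiv ℝ w) y0 :=
  ((hw.fderiv_of_isOpen hO infty_add_one).differentiableOn (by simp)).differentiableAt
    (hO.mem_nhds hy0)

lemma pd_pd_eq (hw : ContDiffOn ℝ (⊤ : ℕ∞) w O) (hO : IsOpen O)
    {y0 : Fin n → ℝ} (hy0 : y0 ∈ O) (a b : Fin n) :
    pd (pd w a) b y0
      = ((fderiv ℝ (fderiv ℝ w) y0) (Pi.single b 1)) (Pi.single a 1) := by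
  have hF : DifferentiableAt ℝ (fderiv ℝ w) y0 := diffAt_fderiv hw hO hy0
  have hc : HasFDerivAt ((⇑(ContinuousLinearMap.apply ℝ ℝ (Pi.single a (1:ℝ)))) ∘ (fderiv ℝ w))
      ((ContinuousLinearMap.apply ℝ ℝ (Pi.single a (1:ℝ))).comp (fderiv ℝ (fderiv ℝ w) y0)) y0 :=
    (ContinuousLinearMap.apply ℝ ℝ (Pi.single a (1:ℝ) : Fin n → ℝ)).hasFDerivAt.comp y0 hF.hasFDerivAt
  have hpd : pd w a = (⇑(ContinuousLinearMap.apply ℝ ℝ (Pi.single a (1:ℝ)))) ∘ (fderiv ℝ w) := rfl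
  show fderiv ℝ (pd w a) y0 (Pi.single b 1) = _
  rw [hpd, hc.fderiv]
  simp

lemma quad_eq_sum (hw : ContDiffOn ℝ (⊤ : ℕ∞) w O) (hO : IsOpen O)
    {y0 : Fin n → ℝ} (hy0 : y0 ∈ O) (v : Fin n → ℝ) :
    ∑ a, ∑ b, v a * v b * pd (pd w a) b y0
      = (fderiv ℝ (fderiv ℝ w) y0 v) v := by
  have hsum : (∑ c, v c • (Pi.single c (1:ℝ) : Fin n → ℝ)) = v := by
    ext j; simp [Pi.single_apply]
  set G := fderiv ℝ (fderiv ℝ w) y0 with hG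
  have h1 : (G v) v = ∑ b, ∑ a, v b * v a * ((G (Pi.single b 1)) (Pi.single a 1)) := by
    calc (G v) v = (G (∑ c, v c • (Pi.single c (1:ℝ) : Fin n → ℝ))) v := by rw [hsum]
      _ = ∑ b, v b * ((G (Pi.single b 1)) v) := by
          rw [map_sum, ContinuousLinearMap.sum_apply]
          refine Finset.sum_congr rfl fun b _ => ?_
          simp
      _ = ∑ b, ∑ a, v b * v a * ((G (Pi.single b 1)) (Pi.single a 1)) := by
          congr 1; funext b
          have : (G (Pi.single b 1)) v
              = ∑ a, v a * ((G (Pi.single b 1)) (Pi.single a 1)) := by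
            calc (G (Pi.single b 1)) v
                = (G (Pi.single b 1)) (∑ c, v c • (Pi.single c (1:ℝ) : Fin n → ℝ)) := by rw [hsum]
              _ = ∑ a, v a * ((G (Pi.single b 1)) (Pi.single a 1)) := by
                  rw [map_sum]; congr 1; funext a; simp
          rw [this, Finset.mul_sum]
          congr 1; funext a; ring
  have h2 : ∑ a, ∑ b, v a * v b * pd (pd w a) b y0
      = ∑ b, ∑ a, v b * v a * ((G (Pi.single b 1)) (Pi.single a 1)) := by
    rw [Finset.sum_comm]
    refine Finset.sum_congr rfl fun b _ => Finset.sum_congr rfl fun a _ => ?_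
    rw [pd_pd_eq hw hO hy0 a b]
    ring
  rw [h2, ← h1]

lemma hasDerivAt_line (hw : ContDiffOn ℝ (⊤ : ℕ∞) w O) (hO : IsOpen O)
    {y0 v : Fin n → ℝ} {t : ℝ} (ht : y0 + t • v ∈ O) :
    HasDerivAt (fun s : ℝ => w (y0 + s • v)) ((fderiv ℝ w (y0 + t • v)) v) t := by
  have hdc : HasDerivAt (fun s : ℝ => y0 + s • v) v t := by
    simpa using ((hasDerivAt_id t).smul_const v).const_add y0
  exact (diffAt_of_contDiffOn hw hO ht).hasFDerivAt.comp_hasDerivAt t hdc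

lemma hasDerivAt_linePhi (hw : ContDiffOn ℝ (⊤ : ℕ∞) w O) (hO : IsOpen O)
    {y0 v : Fin n → ℝ} {t : ℝ} (ht : y0 + t • v ∈ O) :
    HasDerivAt (fun s : ℝ => (fderiv ℝ w (y0 + s • v)) v)
      ((fderiv ℝ (fderiv ℝ w) (y0 + t • v) v) v) t := by
  have hdc : HasDerivAt (fun s : ℝ => y0 + s • v) v t := by
    simpa using ((hasDerivAt_id t).smul_const v).const_add y0
  have hF : DifferentiableAt ℝ (fderiv ℝ w) (y0 + t • v) := diffAt_fderiv hw hO ht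
  have hc : HasFDerivAt (fun y => (fderiv ℝ w y) v)
      ((ContinuousLinearMap.apply ℝ ℝ v).comp (fderiv ℝ (fderiv ℝ w) (y0 + t • v)))
      (y0 + t • v) :=
    (ContinuousLinearMap.apply ℝ ℝ v).hasFDerivAt.comp _ hF.hasFDerivAt
  have := hc.comp_hasDerivAt t hdc
  exact this

/-- Second derivative test: at an interior maximum, the quadratic form is nonpositive. -/
lemma quad_nonpos_at_max (hw : ContDiffOn ℝ (⊤ : ℕ∞) w O) (hO : IsOpen O)
    {y0 : Fin n → ℝ} (hy0 : y0 ∈ O) (hmax : IsMaxOn w O y0) (v : Fin n → ℝ) :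
    (fderiv ℝ (fderiv ℝ w) y0 v) v ≤ 0 := by
  by_contra hcon
  push_neg at hcon
  set Q := (fderiv ℝ (fderiv ℝ w) y0 v) v with hQ
  -- a small interval around 0 mapped into O
  have hline : ContinuousAt (fun s : ℝ => y0 + s • v) 0 := by fun_prop
  have hmem : ∀ᶠ s : ℝ in nhds 0, y0 + s • v ∈ O := by
    have h0 : y0 + (0:ℝ) • v ∈ O := by simpa using hy0
    exact hline (hO.mem_nhds h0)
  obtain ⟨δ0, hδ0, hδ0mem⟩ := Metric.eventually_nhds_iff.1 hmem
  have hδ0mem' : ∀ s : ℝ, |s| < δ0 → y0 + s • v ∈ O := by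
    intro s hs
    exact hδ0mem (by simpa [Real.dist_eq] using hs)
  -- derivative of the line restriction
  set Φ : ℝ → ℝ := fun s => (fderiv ℝ w (y0 + s • v)) v with hΦdef
  have hDφ : ∀ s : ℝ, |s| < δ0 → HasDerivAt (fun s : ℝ => w (y0 + s • v)) (Φ s) s :=
    fun s hs => hasDerivAt_line hw hO (hδ0mem' s hs)
  have hΦ0 : Φ 0 = 0 := by
    have h1 : fderiv ℝ w y0 = 0 :=
      (hmax.isLocalMax (hO.mem_nhds hy0)).fderiv_eq_zero
    simp [hΦdef, h1]
  have hΦQ : HasDerivAt Φ Q 0 := by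
    have := hasDerivAt_linePhi hw hO (v := v) (t := (0:ℝ)) (by simpa using hy0)
    simpa [hΦdef, hQ] using this
  -- positivity of Φ on a right neighborhood
  have hslope : Filter.Tendsto (slope Φ 0) (nhdsWithin 0 {(0:ℝ)}ᶜ) (nhds Q) :=
    hasDerivAt_iff_tendsto_slope.1 hΦQ
  have hev : ∀ᶠ s in nhdsWithin (0:ℝ) {(0:ℝ)}ᶜ, 0 < slope Φ 0 s :=
    hslope.eventually_const_lt hcon
  obtain ⟨δ1, hδ1, hδ1pos⟩ := Metric.eventually_nhds_iff.1 (eventually_nhdsWithin_iff.1 hev)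
  set δ := min δ0 δ1 / 2 with hδdef
  have hδpos : 0 < δ := by positivity
  have hδlt0 : δ < δ0 := by
    have := min_le_left δ0 δ1; simp only [hδdef]; linarith
  have hδlt1 : δ < δ1 := by
    have := min_le_right δ0 δ1; simp only [hδdef]; linarith
  have hΦpos : ∀ s : ℝ, s ∈ Set.Ioo (0:ℝ) δ → 0 < Φ s := by
    intro s hs
    have hsne : s ∈ ({(0:ℝ)}ᶜ : Set ℝ) := by
      simp [ne_of_gt hs.1]
    have hdist : dist s 0 < δ1 := by
      rw [Real.dist_eq]
      rw [sub_zero, abs_of_pos hs.1]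
      linarith [hs.2]
    have := hδ1pos hdist hsne
    rw [slope_def_field, hΦ0] at this
    have hspos := hs.1
    have : 0 < Φ s / s := by simpa using this
    exact (div_pos_iff.1 this).resolve_right (fun h => absurd hspos (by linarith [h.2])) |>.1
  -- strict monotonicity on [0, δ]
  have hmono : StrictMonoOn (fun s : ℝ => w (y0 + s • v)) (Set.Icc 0 δ) := by
    apply strictMonoOn_of_deriv_pos (convex_Icc 0 δ)
    · intro s hs
      have habs : |s| < δ0 := by
        rw [abs_of_nonneg hs.1]
        linarith [hs.2, hδlt0]
      exact ((hDφ s habs).differentiableAt.continuousAt).continuousWithinAt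
    · intro s hs
      rw [interior_Icc] at hs
      have habs : |s| < δ0 := by
        rw [abs_of_pos hs.1]; linarith [hs.2, hδlt0]
      rw [(hDφ s habs).deriv]
      exact hΦpos s ⟨hs.1, hs.2⟩
  have h1 : w (y0 + (0:ℝ) • v) < w (y0 + δ • v) := by
    have := hmono (Set.left_mem_Icc.2 hδpos.le) (Set.right_mem_Icc.2 hδpos.le) hδpos
    exact this
  have h2 : w (y0 + δ • v) ≤ w y0 := by
    apply hmax
    exact hδ0mem' δ (by rw [abs_of_pos hδpos]; linarith)
  simp only [zero_smul, add_zero] at h1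
  linarith

/-- If `w` is constant along the ray through `y0`, the radial second derivative vanishes. -/
lemma quad_radial_zero (hw : ContDiffOn ℝ (⊤ : ℕ∞) w O) (hO : IsOpen O)
    {y0 : Fin n → ℝ} (hy0 : y0 ∈ O)
    (hconst : ∀ᶠ s in nhds (0:ℝ), w (y0 + s • y0) = w y0) :
    (fderiv ℝ (fderiv ℝ w) y0 y0) y0 = 0 := by
  set Φ : ℝ → ℝ := fun s => (fderiv ℝ w (y0 + s • y0)) y0 with hΦdef
  have hline : ContinuousAt (fun s : ℝ => y0 + s • y0) 0 := by fun_prop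
  have hmem : ∀ᶠ s : ℝ in nhds 0, y0 + s • y0 ∈ O := by
    have h0 : y0 + (0:ℝ) • y0 ∈ O := by simpa using hy0
    exact hline (hO.mem_nhds h0)
  have hΦzero : ∀ᶠ s : ℝ in nhds 0, Φ s = 0 := by
    obtain ⟨δ0, hδ0, hδ0c⟩ := Metric.eventually_nhds_iff.1 (hconst.and hmem)
    apply Metric.eventually_nhds_iff.2
    refine ⟨δ0 / 2, by linarith, ?_⟩
    intro s hs
    have hsd : dist s 0 < δ0 / 2 := by simpa using hs
    -- w ∘ line is constant near s, so its derivative Φ s vanishes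
    have hD : HasDerivAt (fun u : ℝ => w (y0 + u • y0)) (Φ s) s :=
      hasDerivAt_line hw hO (hδ0c (y := s) (by
        rw [Real.dist_eq] at hsd ⊢; rw [sub_zero] at hsd ⊢; linarith)).2
    have hCev : (fun u : ℝ => w (y0 + u • y0)) =ᶠ[nhds s] fun _ => w y0 := by
      apply Metric.eventually_nhds_iff.2
      refine ⟨δ0 / 2, by linarith, ?_⟩
      intro u hu
      have hd : dist u 0 < δ0 := by
        calc dist u 0 ≤ dist u s + dist s 0 := dist_triangle u s 0
          _ < δ0 := by linarith [hu, hsd]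
      exact (hδ0c hd).1
    have hD0 : HasDerivAt (fun u : ℝ => w (y0 + u • y0)) 0 s :=
      (hasDerivAt_const s (w y0)).congr_of_eventuallyEq hCev
    exact hD.unique hD0
  have hΦQ : HasDerivAt Φ ((fderiv ℝ (fderiv ℝ w) y0 y0) y0) 0 := by
    have := hasDerivAt_linePhi hw hO (v := y0) (t := (0:ℝ)) (by simpa using hy0)
    simpa [hΦdef] using this
  have hzero : HasDerivAt Φ 0 0 := by
    have h0 : HasDerivAt (fun _ : ℝ => (0:ℝ)) 0 0 := hasDerivAt_const 0 _
    exact h0.congr_of_eventuallyEq hΦzero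
  exact hΦQ.unique hzero

end Hessian


lemma pd_add {u v : (Fin n → ℝ) → ℝ} {y : Fin n → ℝ}
    (hu : DifferentiableAt ℝ u y) (hv : DifferentiableAt ℝ v y) (i : Fin n) :
    pd (fun z => u z + v z) i y = pd u i y + pd v i y := by
  simp [pd, fderiv_fun_add hu hv]

lemma pd_const_mul {u : (Fin n → ℝ) → ℝ} {y : Fin n → ℝ} (c : ℝ)
    (hu : DifferentiableAt ℝ u y) (i : Fin n) :
    pd (fun z => c * u z) i y = c * pd u i y := by
  simp [pd, fderiv_const_mul hu c]

lemma pd_linear (φ : (Fin n → ℝ) →ₗ[ℝ] ℝ) (i : Fin n) (y : Fin n → ℝ) :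
    pd (fun z => φ z) i y = φ (Pi.single i 1) := by
  have h1 : (fun z : Fin n → ℝ => φ z) = ⇑(LinearMap.toContinuousLinearMap φ) := by
    funext z; simp
  rw [pd, h1, (LinearMap.toContinuousLinearMap φ).fderiv]
  simp

section LorentzAlg

open Matrix

lemma revCS {S T p A X Lq : ℝ} (hS : 0 ≤ S) (hT : 0 ≤ T) (hCS : p^2 ≤ S*T)
    (hLq : Lq = A^2 - S) (hpos : 0 < Lq) : Lq * (X^2 - T) ≤ (X*A + p)^2 := by
  rcases eq_or_lt_of_le hS with h0 | hSpos
  · have hp : p^2 ≤ 0 := by rw [← h0] at hCS; simpa using hCS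
    have hp0 : p = 0 := by nlinarith [sq_nonneg p]
    subst hLq hp0
    rw [← h0]
    nlinarith [sq_nonneg (X*A), sq_nonneg A, mul_nonneg (sq_nonneg A) hT]
  · have hid : S * ((X*A + p)^2 - Lq*(X^2 - T)) = (S*X + A*p)^2 + (A^2 - S)*(S*T - p^2) := by
      subst hLq; ring
    nlinarith [sq_nonneg (S*X + A*p), mul_nonneg (by nlinarith : (0:ℝ) ≤ A^2 - S)
      (by nlinarith : (0:ℝ) ≤ S*T - p^2), hSpos]

/-- Quadratic form of a matrix. -/
def sq2 {n : ℕ} (M : Matrix (Fin n) (Fin n) ℝ) (v : Fin n → ℝ) : ℝ :=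
  ∑ a, ∑ b, v a * v b * M a b

/-- Pairing of two matrices. -/
def pairS {n : ℕ} (M W : Matrix (Fin n) (Fin n) ℝ) : ℝ :=
  ∑ a, ∑ b, M a b * W a b

variable {n : ℕ}

lemma sq2_eq_dot (M : Matrix (Fin n) (Fin n) ℝ) (v : Fin n → ℝ) :
    sq2 M v = v ⬝ᵥ (M *ᵥ v) := by
  simp only [sq2, dotProduct, Matrix.mulVec, dotProduct, Finset.mul_sum]
  exact Finset.sum_congr rfl fun a _ => Finset.sum_congr rfl fun b _ => by ring

lemma sq2_congruence (M P : Matrix (Fin n) (Fin n) ℝ) (ζ : Fin n → ℝ) :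
    sq2 (Pᵀ * M * P) ζ = sq2 M (P *ᵥ ζ) := by
  rw [sq2_eq_dot, sq2_eq_dot]
  rw [show (Pᵀ * M * P) *ᵥ ζ = Pᵀ *ᵥ (M *ᵥ (P *ᵥ ζ)) by
    rw [Matrix.mulVec_mulVec, Matrix.mulVec_mulVec, Matrix.mul_assoc]]
  rw [Matrix.dotProduct_mulVec, Matrix.vecMul_transpose]

lemma mul_vecMulVec_mul (P : Matrix (Fin n) (Fin n) ℝ) (u v : Fin n → ℝ) :
    P * vecMulVec u v * Pᵀ = vecMulVec (P *ᵥ u) (P *ᵥ v) := by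
  ext a b
  simp only [Matrix.mul_apply, Matrix.vecMulVec_apply, Matrix.transpose_apply,
    Matrix.mulVec, dotProduct]
  rw [Finset.sum_mul_sum]
  rw [Finset.sum_comm]
  refine Finset.sum_congr rfl fun k _ => ?_
  rw [Finset.sum_mul]
  exact Finset.sum_congr rfl fun l _ => by ring

lemma pairS_sum {ι : Type*} (s : Finset ι) (F : ι → Matrix (Fin n) (Fin n) ℝ)
    (W : Matrix (Fin n) (Fin n) ℝ) :
    pairS (∑ m ∈ s, F m) W = ∑ m ∈ s, pairS (F m) W := by
  simp only [pairS, Matrix.sum_apply, Finset.sum_mul]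
  refine Eq.trans (Finset.sum_congr rfl fun a _ => Finset.sum_comm) ?_
  exact Finset.sum_comm

lemma pairS_vecMulVec (u : Fin n → ℝ) (W : Matrix (Fin n) (Fin n) ℝ) :
    pairS (vecMulVec u u) W = sq2 W u := by
  simp only [pairS, sq2, Matrix.vecMulVec_apply]

/-- Key Lorentz-algebra lemma: if `g` has Lorentz signature, `y` is `g`-timelike, and the
quadratic form `W` is negative semidefinite with `W(y,y) = 0`, then `tr(g⁻¹ W) ≥ 0`. -/
lemma lorentz_trace_nonneg (hn : 0 < n) {g : Matrix (Fin n) (Fin n) ℝ}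
    (hsig : LorentzSignature g) {y : Fin n → ℝ} (hy : 0 < sq2 g y)
    {W : Matrix (Fin n) (Fin n) ℝ} (hW : ∀ v, sq2 W v ≤ 0) (hWy : sq2 W y = 0) :
    0 ≤ ∑ a, ∑ b, g⁻¹ a b * W a b := by
  obtain ⟨P, hP, hPg⟩ := hsig
  set d : Fin n → ℝ := fun i => if (i : ℕ) = 0 then (1:ℝ) else -1 with hd
  set η : Matrix (Fin n) (Fin n) ℝ := Matrix.diagonal d with hη
  have hPT : IsUnit Pᵀ.det := by rwa [Matrix.det_transpose]
  have hηη : η * η = 1 := by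
    rw [hη, Matrix.diagonal_mul_diagonal]
    have : (fun i => d i * d i) = fun _ => (1:ℝ) := by
      funext i
      by_cases h : (i : ℕ) = 0 <;> simp [hd, h]
    rw [this, Matrix.diagonal_one]
  have hg : Pᵀ⁻¹ * η * P⁻¹ = g := by
    rw [← hPg, mul_assoc Pᵀ g P, Matrix.nonsing_inv_mul_cancel_left Pᵀ (g * P) hPT,
      Matrix.mul_nonsing_inv_cancel_right P g hP]
  have hginv : g⁻¹ = P * η * Pᵀ := by
    apply Matrix.inv_eq_right_inv
    rw [← hg, mul_assoc P η Pᵀ, mul_assoc (Pᵀ⁻¹ * η) P⁻¹ (P * (η * Pᵀ)),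
      Matrix.nonsing_inv_mul_cancel_left P (η * Pᵀ) hP,
      mul_assoc Pᵀ⁻¹ η (η * Pᵀ), ← mul_assoc η η Pᵀ, hηη, one_mul,
      Matrix.nonsing_inv_mul Pᵀ hPT]
  set q : Fin n → ℝ := P⁻¹ *ᵥ y with hqdef
  have hq : P *ᵥ q = y := by
    rw [hqdef, Matrix.mulVec_mulVec, Matrix.mul_nonsing_inv _ hP, Matrix.one_mulVec]
  set Lq : ℝ := sq2 g y with hLqdef
  have hLqη : sq2 η q = Lq := by
    have h1 : sq2 (Pᵀ * g * P) q = sq2 g (P *ᵥ q) := sq2_congruence g P q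
    rw [hPg, hq] at h1
    rw [h1, hLqdef]
  -- index 0
  set i0 : Fin n := ⟨0, hn⟩ with hi0
  have hd_i0 : d i0 = 1 := by simp [hd, hi0]
  have hd_ne : ∀ a : Fin n, a ≠ i0 → d a = -1 := by
    intro a ha
    have : (a : ℕ) ≠ 0 := fun h => ha (Fin.ext h)
    simp [hd, this]
  have sq2_eta : ∀ ζ : Fin n → ℝ,
      sq2 η ζ = ζ i0 ^ 2 - ∑ i ∈ Finset.univ.erase i0, ζ i ^ 2 := by
    intro ζ
    have h1 : sq2 η ζ = ∑ a, ζ a * ζ a * d a := by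
      rw [sq2]
      refine Finset.sum_congr rfl fun a _ => ?_
      rw [Finset.sum_eq_single a]
      · simp [hη, Matrix.diagonal_apply_eq]
      · intro b _ hb
        simp [hη, Matrix.diagonal_apply_ne' _ hb]
      · intro h; exact absurd (Finset.mem_univ a) h
    rw [h1, ← Finset.sum_erase_add _ _ (Finset.mem_univ i0), hd_i0]
    have : ∑ a ∈ Finset.univ.erase i0, ζ a * ζ a * d a
        = -∑ i ∈ Finset.univ.erase i0, ζ i ^ 2 := by
      rw [← Finset.sum_neg_distrib]
      refine Finset.sum_congr rfl fun a ha => ?_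
      rw [hd_ne a (Finset.mem_erase.1 ha).1]
      ring
    rw [this]
    ring
  -- the PSD matrix K
  set K : Matrix (Fin n) (Fin n) ℝ := (1/Lq) • vecMulVec q q - η with hK
  have hsq2K : ∀ ζ : Fin n → ℝ,
      sq2 K ζ = (∑ a, ζ a * q a)^2 / Lq - sq2 η ζ := by
    intro ζ
    have h1 : sq2 K ζ = (1/Lq) * sq2 (vecMulVec q q) ζ - sq2 η ζ := by
      simp only [sq2, hK, Matrix.sub_apply, Matrix.smul_apply, smul_eq_mul]
      rw [Finset.mul_sum, ← Finset.sum_sub_distrib]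
      refine Finset.sum_congr rfl fun a _ => ?_
      rw [Finset.mul_sum, ← Finset.sum_sub_distrib]
      refine Finset.sum_congr rfl fun b _ => by ring
    have h2 : sq2 (vecMulVec q q) ζ = (∑ a, ζ a * q a)^2 := by
      simp only [sq2, Matrix.vecMulVec_apply]
      rw [sq, Finset.sum_mul_sum]
      refine Finset.sum_congr rfl fun a _ => Finset.sum_congr rfl fun b _ => by ring
    rw [h1, h2]
    ring
  have hKpos : ∀ ζ : Fin n → ℝ, 0 ≤ sq2 K ζ := by
    intro ζ
    rw [hsq2K, sq2_eta]
    have hLq : Lq = q i0 ^ 2 - ∑ i ∈ Finset.univ.erase i0, q i ^ 2 := by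
      rw [← hLqη, sq2_eta]
    have hCS : (∑ i ∈ Finset.univ.erase i0, q i * ζ i)^2
        ≤ (∑ i ∈ Finset.univ.erase i0, q i ^ 2) * ∑ i ∈ Finset.univ.erase i0, ζ i ^ 2 :=
      Finset.sum_mul_sq_le_sq_mul_sq _ _ _
    have hsplit : ∑ a, ζ a * q a
        = ζ i0 * q i0 + ∑ i ∈ Finset.univ.erase i0, q i * ζ i := by
      rw [← Finset.sum_erase_add _ _ (Finset.mem_univ i0), add_comm]
      congr 1
      exact Finset.sum_congr rfl fun a _ => by ring
    have hrev := revCS (S := ∑ i ∈ Finset.univ.erase i0, q i ^ 2)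
      (T := ∑ i ∈ Finset.univ.erase i0, ζ i ^ 2)
      (p := ∑ i ∈ Finset.univ.erase i0, q i * ζ i)
      (A := q i0) (X := ζ i0) (Lq := Lq)
      (Finset.sum_nonneg fun i _ => sq_nonneg _)
      (Finset.sum_nonneg fun i _ => sq_nonneg _) hCS hLq hy
    rw [hsplit]
    rw [sub_nonneg, le_div_iff₀ hy]
    calc (ζ i0 ^ 2 - ∑ i ∈ Finset.univ.erase i0, ζ i ^ 2) * Lq
        = Lq * (ζ i0 ^ 2 - ∑ i ∈ Finset.univ.erase i0, ζ i ^ 2) := by ring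
      _ ≤ (ζ i0 * q i0 + ∑ i ∈ Finset.univ.erase i0, q i * ζ i)^2 := hrev
  have hKherm : K.IsHermitian := by
    rw [Matrix.IsHermitian]
    ext a b
    simp only [Matrix.conjTranspose_apply, hK, Matrix.sub_apply, Matrix.smul_apply,
      Matrix.vecMulVec_apply, star_trivial, smul_eq_mul]
    have : η b a = η a b := by
      by_cases h : a = b
      · rw [h]
      · rw [hη, Matrix.diagonal_apply_ne _ (Ne.symm h), Matrix.diagonal_apply_ne _ h]
    rw [this]
    ring_nf
  have hKpsd : Matrix.PosSemidef K := by
    refine Matrix.PosSemidef.of_dotProduct_mulVec_nonneg hKherm (fun x => ?_)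
    rw [star_trivial, ← sq2_eq_dot]
    exact hKpos x
  open scoped MatrixOrder in
  set Sm : Matrix (Fin n) (Fin n) ℝ := CFC.sqrt K with hSm
  have hSmherm : Smᵀ = Sm := by
    open scoped MatrixOrder in
    exact (Matrix.nonneg_iff_posSemidef.1 (CFC.sqrt_nonneg K)).1
  have hSS : Sm * Sm = K := by
    open scoped MatrixOrder in
    exact CFC.sqrt_mul_sqrt_self K (Matrix.nonneg_iff_posSemidef.2 hKpsd)
  -- K as a sum of rank-one matrices
  have hKsum : K = ∑ m, vecMulVec (fun k => Sm k m) (fun k => Sm k m) := by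
    rw [← hSS]
    ext k l
    simp only [Matrix.mul_apply, Matrix.sum_apply, Matrix.vecMulVec_apply]
    refine Finset.sum_congr rfl fun m _ => ?_
    have : Sm m l = Sm l m := by
      conv_lhs => rw [← hSmherm]
      simp [Matrix.transpose_apply]
    rw [this]
  -- decompose g⁻¹
  have hdecomp : g⁻¹ = (1/Lq) • vecMulVec y y - P * K * Pᵀ := by
    rw [hK, Matrix.mul_sub, Matrix.sub_mul, Matrix.mul_smul, Matrix.smul_mul,
      mul_vecMulVec_mul, hq, hginv]
    abel
  have hfinal : ∑ a, ∑ b, g⁻¹ a b * W a b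
      = (1/Lq) * sq2 W y - pairS (P * K * Pᵀ) W := by
    rw [hdecomp]
    simp only [Matrix.sub_apply, Matrix.smul_apply, Matrix.vecMulVec_apply, smul_eq_mul,
      sq2, pairS]
    rw [Finset.mul_sum, ← Finset.sum_sub_distrib]
    refine Finset.sum_congr rfl fun a _ => ?_
    rw [Finset.mul_sum, ← Finset.sum_sub_distrib]
    refine Finset.sum_congr rfl fun b _ => by ring
  have hpair : pairS (P * K * Pᵀ) W ≤ 0 := by
    have h1 : P * K * Pᵀ = ∑ m, vecMulVec (P *ᵥ fun k => Sm k m) (P *ᵥ fun k => Sm k m) := by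
      rw [hKsum, Finset.mul_sum, Finset.sum_mul]
      refine Finset.sum_congr rfl fun m _ => mul_vecMulVec_mul P _ _
    rw [h1, pairS_sum]
    apply Finset.sum_nonpos
    intro m _
    rw [pairS_vecMulVec]
    exact hW _
  have hsq2Wy : sq2 W y = 0 := hWy
  rw [hfinal, hsq2Wy]
  simp only [mul_zero]
  linarith


lemma lorentz_symm {n : ℕ} {g : Matrix (Fin n) (Fin n) ℝ} (h : LorentzSignature g) :
    gᵀ = g := by
  obtain ⟨P, hP, hPg⟩ := h
  have hPT : IsUnit Pᵀ.det := by rwa [Matrix.det_transpose]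
  set η : Matrix (Fin n) (Fin n) ℝ :=
    Matrix.diagonal (fun i : Fin n => if (i : ℕ) = 0 then (1:ℝ) else -1) with hη
  have hg : Pᵀ⁻¹ * η * P⁻¹ = g := by
    rw [← hPg, mul_assoc Pᵀ g P, Matrix.nonsing_inv_mul_cancel_left Pᵀ (g * P) hPT,
      Matrix.mul_nonsing_inv_cancel_right P g hP]
  have hηsym : ηᵀ = η := Matrix.diagonal_transpose _
  rw [← hg]
  calc (Pᵀ⁻¹ * η * P⁻¹)ᵀ = (P⁻¹)ᵀ * (ηᵀ * (Pᵀ⁻¹)ᵀ) := by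
        rw [Matrix.transpose_mul, Matrix.transpose_mul]
    _ = Pᵀ⁻¹ * (η * P⁻¹) := by
        rw [hηsym, Matrix.transpose_nonsing_inv, Matrix.transpose_nonsing_inv,
          Matrix.transpose_transpose]
    _ = Pᵀ⁻¹ * η * P⁻¹ := by rw [mul_assoc]

lemma trace_inv_self {n : ℕ} {g : Matrix (Fin n) (Fin n) ℝ} (hsym : gᵀ = g)
    (hdet : IsUnit g.det) : ∑ a, ∑ b, g⁻¹ a b * g a b = (n : ℝ) := by
  have h1 : ∀ a b, g a b = g b a := by
    intro a b
    conv_lhs => rw [← hsym]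
    simp [Matrix.transpose_apply]
  have h2 : ∀ a : Fin n, ∑ b, g⁻¹ a b * g a b = (g⁻¹ * g) a a := by
    intro a
    rw [Matrix.mul_apply]
    exact Finset.sum_congr rfl fun b _ => by rw [h1 a b]
  calc ∑ a, ∑ b, g⁻¹ a b * g a b = ∑ a : Fin n, (g⁻¹ * g) a a := by
        exact Finset.sum_congr rfl fun a _ => h2 a
    _ = ∑ a : Fin n, (1 : Matrix (Fin n) (Fin n) ℝ) a a := by
        rw [Matrix.nonsing_inv_mul g hdet]
    _ = (n : ℝ) := by simp [Matrix.one_apply_eq]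

end LorentzAlg

end AuxCalc

set_option maxHeartbeats 2000000 in
/-- Main lemma: under the hypotheses of the theorem, `f ≤ 0` on the closure. -/
lemma key_nonpos
    {n : ℕ} (hn : 2 ≤ n) (C U : Set (Fin n → ℝ)) (L : (Fin n → ℝ) → ℝ)
    (hD : LorentzDatum n C U L)
    (κ : ℝ) (hκ0 : κ ≠ 0) (hκ : κ < 2 * (n : ℝ))
    (V : Set (Fin n → ℝ)) (hVopen : IsOpen V) (hCV : clos C ⊆ V)
    (f : (Fin n → ℝ) → ℝ)
    (hfsmooth : ContDiffOn ℝ (⊤ : ℕ∞) f V) (hfhom : PosHom 2 V f)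
    (heq : ∀ y ∈ C, κ * f y - L y * ∑ a, ∑ b, ginv L y a b * pd (pd f a) b y = 0) :
    ∀ y ∈ clos C, f y ≤ 0 := by
  obtain ⟨φ, hφne, hφpos⟩ := hD.halfspace
  have hφcont : Continuous φ := φ.continuous_of_finiteDimensional
  have hn0 : 0 < n := by omega
  have hCopen := hD.openC
  have hUopen := hD.openU
  have hCsub : C ⊆ clos C := fun y hy => ⟨subset_closure hy, hD.nzC y hy⟩
  have hCU : C ⊆ U := fun y hy => hD.closSub (hCsub hy)
  have hCV' : C ⊆ V := fun y hy => hCV (hCsub hy)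
  have hLC : ContDiffOn ℝ (⊤:ℕ∞) L C := hD.smoothL.mono hCU
  have hLhomC : PosHom 2 C L := fun y hy t ht => hD.homL y (hCU hy) t ht
  have hfC : ContDiffOn ℝ (⊤:ℕ∞) f C := hfsmooth.mono hCV'
  have hLpos := hD.posC
  have hLnonneg : ∀ y ∈ clos C, 0 ≤ L y := by
    intro y hy
    by_cases hyC : y ∈ C
    · exact (hLpos y hyC).le
    · exact le_of_eq (hD.zeroBd y ⟨hy, hyC⟩).symm
  -- continuity of the metric data
  have hgmet_cont : ∀ a b : Fin n, ContinuousOn (fun y => gmet L y a b) U := by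
    intro a b
    have h1 := (contDiffOn_pd (contDiffOn_pd hD.smoothL hUopen a) hUopen b).continuousOn
    have h2 : (fun y => gmet L y a b) = fun y => (1/2 : ℝ) * pd (pd L a) b y := rfl
    rw [h2]
    exact continuousOn_const.mul h1
  have hgmetM_cont : ContinuousOn (fun y => gmet L y) U := by
    apply continuousOn_pi.2
    intro a
    apply continuousOn_pi.2
    intro b
    exact hgmet_cont a b
  have hdet_cont : ContinuousOn (fun y => (gmet L y).det) U :=
    (continuous_id.matrix_det).comp_continuousOn hgmetM_cont
  have hadj_cont : ContinuousOn (fun y => (gmet L y).adjugate) U :=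
    (continuous_id.matrix_adjugate).comp_continuousOn hgmetM_cont
  have hginv_cont : ∀ a b : Fin n, ContinuousOn (fun y => ginv L y a b) U := by
    intro a b
    have hform : (fun y => ginv L y a b)
        = fun y => ((gmet L y).det)⁻¹ * (gmet L y).adjugate a b := by
      funext y
      show (gmet L y)⁻¹ a b = _
      rw [Matrix.inv_def, Ring.inverse_eq_inv']
      simp [Matrix.smul_apply]
    rw [hform]
    exact (hdet_cont.inv₀ fun y hy => (hD.gInvU y hy).ne_zero).mul
      (continuousOn_pi.1 (continuousOn_pi.1 hadj_cont a) b)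
  set G : (Fin n → ℝ) → ℝ := fun y => ∑ a, ∑ b, ginv L y a b * pd (pd f a) b y with hGdef
  have hG_cont : ContinuousOn G (U ∩ V) := by
    apply continuousOn_finset_sum
    intro a _
    apply continuousOn_finset_sum
    intro b _
    exact ((hginv_cont a b).mono Set.inter_subset_left).mul
      (((contDiffOn_pd (contDiffOn_pd hfsmooth hVopen a) hVopen b).continuousOn).mono
        Set.inter_subset_right)
  have hUVopen : IsOpen (U ∩ V) := hUopen.inter hVopen
  have hclosUV : clos C ⊆ U ∩ V := fun y hy => ⟨hD.closSub hy, hCV hy⟩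
  -- the PDE extends to the closure by continuity
  have hPDE : ∀ y ∈ clos C, κ * f y = L y * G y := by
    intro y hy
    have hyUV := hclosUV hy
    have hFcont : ContinuousOn (fun z => κ * f z - L z * G z) (U ∩ V) :=
      (continuousOn_const.mul (hfsmooth.continuousOn.mono Set.inter_subset_right)).sub
        (((hD.smoothL.continuousOn).mono Set.inter_subset_left).mul hG_cont)
    have hCA : ContinuousAt (fun z => κ * f z - L z * G z) y :=
      hFcont.continuousAt (hUVopen.mem_nhds hyUV)
    have hne : (nhdsWithin y C).NeBot := mem_closure_iff_nhdsWithin_neBot.1 hy.1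
    have ht1 : Filter.Tendsto (fun z => κ * f z - L z * G z) (nhdsWithin y C)
        (nhds (κ * f y - L y * G y)) := hCA.tendsto.mono_left nhdsWithin_le_nhds
    have ht2 : Filter.Tendsto (fun z => κ * f z - L z * G z) (nhdsWithin y C) (nhds 0) := by
      apply Filter.Tendsto.congr' _ tendsto_const_nhds
      filter_upwards [self_mem_nhdsWithin] with z hz
      exact (heq z hz).symm
    have h0 := tendsto_nhds_unique ht1 ht2
    linarith [h0]
  have hbd0 : ∀ y ∈ clos C, y ∉ C → f y = 0 := by
    intro y hy hyC
    have h1 := hPDE y hy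
    rw [hD.zeroBd y ⟨hy, hyC⟩, zero_mul] at h1
    exact (mul_eq_zero.1 h1).resolve_left hκ0
  -- the compact slice
  set S1 : Set (Fin n → ℝ) := Metric.sphere 0 1 with hS1
  set KS : Set (Fin n → ℝ) := closure C ∩ S1 with hKSdef
  have hKSclos : KS ⊆ clos C := by
    intro y hy
    refine ⟨hy.1, ?_⟩
    intro h0
    have h1 : ‖y‖ = 1 := by
      have := hy.2
      rwa [hS1, mem_sphere_zero_iff_norm] at this
    rw [h0] at h1
    simp at h1
  have hKScomp : IsCompact KS := (isCompact_sphere (0 : Fin n → ℝ) 1).inter_left isClosed_closure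
  have hnormalize : ∀ y ∈ C, (‖y‖⁻¹ • y) ∈ C ∩ S1 := by
    intro y hy
    have hy0 : y ≠ 0 := hD.nzC y hy
    have hny : 0 < ‖y‖ := norm_pos_iff.2 hy0
    refine ⟨hD.conicC hy (inv_pos.2 hny), ?_⟩
    rw [hS1, mem_sphere_zero_iff_norm, norm_smul, norm_inv, norm_norm]
    exact inv_mul_cancel₀ hny.ne'
  have hCS1sub : C ∩ S1 ⊆ KS := fun y hy => ⟨subset_closure hy.1, hy.2⟩
  have hKSne : KS.Nonempty := by
    obtain ⟨y, hy⟩ := hD.connC.nonempty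
    exact ⟨_, hCS1sub (hnormalize y hy)⟩
  have hKSU : KS ⊆ U := fun y hy => hD.closSub (hKSclos hy)
  have hKSUV : KS ⊆ U ∩ V := fun y hy => hclosUV (hKSclos hy)
  -- min of φ on the slice
  obtain ⟨zd, hzd, hzdmin⟩ := hKScomp.exists_isMinOn hKSne hφcont.continuousOn
  set dφ : ℝ := φ zd with hdφ
  have hdφpos : 0 < dφ := hφpos zd (hKSclos hzd)
  have hdφle : ∀ y ∈ KS, dφ ≤ φ y := fun y hy => isMinOn_iff.1 hzdmin y hy
  -- the linear-growth bound constant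
  obtain ⟨CG, hCG⟩ := hKScomp.exists_bound_of_continuousOn (hG_cont.mono hKSUV)
  set K0 : ℝ := max (CG / |κ|) 0 with hK0def
  have hK0nonneg : 0 ≤ K0 := le_max_right _ _
  have hbase : ∀ y ∈ KS, f y ≤ K0 * L y := by
    intro y hy
    have h1 := hPDE y (hKSclos hy)
    have hLy := hLnonneg y (hKSclos hy)
    have hf : f y = L y * G y / κ := by
      field_simp
      linear_combination h1
    have h3 : |G y| ≤ CG := by
      have := hCG y hy
      rwa [Real.norm_eq_abs] at this
    have habs : (0:ℝ) < |κ| := abs_pos.2 hκ0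
    calc f y ≤ |f y| := le_abs_self _
      _ = L y * |G y| / |κ| := by
          rw [hf, abs_div, abs_mul, abs_of_nonneg hLy]
      _ ≤ L y * CG / |κ| := by gcongr
      _ = (CG / |κ|) * L y := by ring
      _ ≤ K0 * L y := mul_le_mul_of_nonneg_right (le_max_left _ _) hLy
  -- barrier constants
  set cφ : Fin n → ℝ := fun a => φ (Pi.single a 1) with hcφ
  set Bf : (Fin n → ℝ) → ℝ := fun y => ∑ a, ∑ b, ginv L y a b * (cφ a * cφ b) with hBf
  set hMf : (Fin n → ℝ) → ℝ := fun y => κ * (φ y * φ y) - 2 * L y * Bf y with hMform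
  have hBf_cont : ContinuousOn Bf U := by
    apply continuousOn_finset_sum
    intro a _
    apply continuousOn_finset_sum
    intro b _
    exact (hginv_cont a b).mul continuousOn_const
  have hMcont : ContinuousOn hMf U :=
    (continuousOn_const.mul ((hφcont.continuousOn).mul hφcont.continuousOn)).sub
      ((continuousOn_const.mul hD.smoothL.continuousOn).mul hBf_cont)
  obtain ⟨zM, hzM, hzMmax⟩ := hKScomp.exists_isMaxOn hKSne (hMcont.mono hKSU)
  have h2nκ : 0 < 2*(n:ℝ) - κ := by linarith
  set M1 : ℝ := max (hMf zM) 0 / (2*(n:ℝ) - κ) with hM1def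
  have hM1nonneg : 0 ≤ M1 := div_nonneg (le_max_right _ _) h2nκ.le
  set θ : ℝ := M1 / (M1 + dφ * dφ) with hθdef
  have hMdpos : 0 < M1 + dφ * dφ := by nlinarith [hdφpos, hM1nonneg]
  have hθnonneg : 0 ≤ θ := div_nonneg hM1nonneg hMdpos.le
  have hθlt1 : θ < 1 := by
    rw [hθdef, div_lt_one hMdpos]
    nlinarith [hdφpos]
  -- the contraction step
  have step : ∀ K : ℝ, 0 ≤ K → (∀ y ∈ C ∩ S1, f y ≤ K * L y) →
      ∀ y ∈ C ∩ S1, f y ≤ (K * θ) * L y := by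
    intro K hK hbound y hyCS
    have hyKS : y ∈ KS := hCS1sub hyCS
    have hεbound : ∀ ε : ℝ, 0 < ε → f y ≤ K * θ * (L y + ε * (φ y * φ y)) := by
      intro ε hε
      set ψ : (Fin n → ℝ) → ℝ := fun z => L z + ε * (φ z * φ z) with hψdef
      set w : (Fin n → ℝ) → ℝ := fun z => f z / ψ z with hwdef
      have hψposKS : ∀ z ∈ KS, 0 < ψ z := by
        intro z hz
        have h1 := hdφle z hz
        have h2 := hLnonneg z (hKSclos hz)
        show 0 < L z + ε * (φ z * φ z)
        have h3 : 0 < φ z := lt_of_lt_of_le hdφpos h1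
        have h4 : 0 < ε * (φ z * φ z) := mul_pos hε (mul_pos h3 h3)
        linarith
      have hψposC : ∀ z ∈ C, 0 < ψ z := by
        intro z hz
        have h1 := hLpos z hz
        show 0 < L z + ε * (φ z * φ z)
        nlinarith [mul_self_nonneg (φ z)]
      have hwcont : ContinuousOn w KS := by
        apply ContinuousOn.div
        · exact hfsmooth.continuousOn.mono fun z hz => (hKSUV hz).2
        · exact ((hD.smoothL.continuousOn).mono hKSU).add
            (continuousOn_const.mul ((hφcont.continuousOn).mul hφcont.continuousOn))
        · exact fun z hz => (hψposKS z hz).ne'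
      obtain ⟨y0, hy0KS, hy0max⟩ := hKScomp.exists_isMaxOn hKSne hwcont
      by_cases hmpos : 0 < w y0
      case neg =>
        push_neg at hmpos
        have h1 : f y = w y * ψ y := (div_mul_cancel₀ _ (hψposKS y hyKS).ne').symm
        have h2 : w y ≤ w y0 := isMaxOn_iff.1 hy0max y hyKS
        have h5 : w y ≤ 0 := le_trans h2 hmpos
        have h3 : f y ≤ 0 := by
          rw [h1]
          nlinarith [hψposKS y hyKS]
        have h4 : 0 ≤ K * θ * (L y + ε * (φ y * φ y)) :=
          mul_nonneg (mul_nonneg hK hθnonneg)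
            (add_nonneg (hLnonneg y (hKSclos hyKS))
              (mul_nonneg hε.le (mul_self_nonneg _)))
        linarith
      case pos =>
        have hy0C : y0 ∈ C := by
          by_contra hy0nC
          have h1 : f y0 = 0 := hbd0 y0 (hKSclos hy0KS) hy0nC
          have h2 : w y0 = 0 := by
            show f y0 / ψ y0 = 0
            rw [h1, zero_div]
          linarith
        have hy0S : y0 ∈ S1 := hy0KS.2
        -- 0-homogeneity of w on C
        have hwhom : ∀ z ∈ C, ∀ t : ℝ, 0 < t → w (t • z) = w z := by
          intro z hz t ht
          have h1 : f (t • z) = t^(2:ℝ) * f z := hfhom z (hCV' hz) t ht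
          have h2 : L (t • z) = t^(2:ℝ) * L z := hD.homL z (hCU hz) t ht
          have h3 : φ (t • z) = t * φ z := by rw [map_smul]; simp
          have ht2 : t^(2:ℝ) = t * t := by
            rw [show (2:ℝ) = ((2:ℕ):ℝ) by norm_num, Real.rpow_natCast]
            ring
          have htt : t * t ≠ 0 := by positivity
          show f (t • z) / (L (t • z) + ε * (φ (t • z) * φ (t • z)))
              = f z / (L z + ε * (φ z * φ z))
          rw [h1, h2, h3, ht2]
          rw [show t * φ z * (t * φ z) = t * t * (φ z * φ z) by ring]
          rw [show t*t*(L z) + ε*(t*t*(φ z * φ z)) = (t*t) * (L z + ε*(φ z*φ z)) by ring]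
          rw [mul_div_mul_left _ _ htt]
        have hwmaxC : IsMaxOn w C y0 := by
          apply isMaxOn_iff.2
          intro z hz
          have hz' := hnormalize z hz
          have h1 : w z = w (‖z‖⁻¹ • z) :=
            (hwhom z hz _ (inv_pos.2 (norm_pos_iff.2 (hD.nzC z hz)))).symm
          rw [h1]
          exact isMaxOn_iff.1 hy0max _ (hCS1sub hz')
        -- smoothness of ψ and w on C
        have hφeq : (fun z : Fin n → ℝ => φ z) = ⇑(LinearMap.toContinuousLinearMap φ) := by
          funext z; simp
        have hφcd : ContDiff ℝ (⊤:ℕ∞) (fun z : Fin n → ℝ => φ z) := by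
          rw [hφeq]
          exact (LinearMap.toContinuousLinearMap φ).contDiff
        have hφdiff : ∀ (z : Fin n → ℝ), DifferentiableAt ℝ (fun u : Fin n → ℝ => φ u) z :=
          fun z => (hφcd.differentiable (by simp)).differentiableAt
        have hψsm : ContDiffOn ℝ (⊤:ℕ∞) ψ C :=
          hLC.add (contDiffOn_const.mul (hφcd.contDiffOn.mul hφcd.contDiffOn))
        have hwsm : ContDiffOn ℝ (⊤:ℕ∞) w C :=
          hfC.div hψsm fun z hz => (hψposC z hz).ne'
        have hcrit : fderiv ℝ w y0 = 0 :=
          (hwmaxC.isLocalMax (hCopen.mem_nhds hy0C)).fderiv_eq_zero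
        have hcritpd : ∀ a, pd w a y0 = 0 := fun a => by simp [pd, hcrit]
        -- Hessian
        set W : Matrix (Fin n) (Fin n) ℝ := Matrix.of (fun a b => pd (pd w a) b y0) with hWdef
        have hWquad : ∀ v, sq2 W v = (fderiv ℝ (fderiv ℝ w) y0 v) v := fun v =>
          quad_eq_sum hwsm hCopen hy0C v
        have hWneg : ∀ v, sq2 W v ≤ 0 := by
          intro v
          rw [hWquad]
          exact quad_nonpos_at_max hwsm hCopen hy0C hwmaxC v
        have hWy0 : sq2 W y0 = 0 := by
          rw [hWquad]
          apply quad_radial_zero hwsm hCopen hy0C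
          have hε1 : ∀ s : ℝ, |s| < 1 → w (y0 + s • y0) = w y0 := by
            intro s hs
            have h1 : y0 + s • y0 = (1+s) • y0 := by
              rw [add_smul, one_smul]
            have h2 : (0:ℝ) < 1 + s := by
              have := abs_lt.1 hs
              linarith [this.1]
            rw [h1]
            exact hwhom y0 hy0C _ h2
          apply Metric.eventually_nhds_iff.2
          exact ⟨1, one_pos, fun s hs => hε1 s (by simpa [Real.dist_eq] using hs)⟩
        -- Euler contraction and Lorentz trace
        have hgsq : sq2 (gmet L y0) y0 = L y0 :=
          gmet_contract hCopen hD.conicC hLC hLhomC hy0C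
        have hLy0pos : 0 < L y0 := hLpos y0 hy0C
        have hT : 0 ≤ ∑ a, ∑ b, ginv L y0 a b * W a b :=
          lorentz_trace_nonneg hn0 (hD.lorentz y0 (hCsub hy0C))
            (by rw [hgsq]; exact hLy0pos) hWneg hWy0
        -- derivative computations
        have hLdiff : ∀ z ∈ C, DifferentiableAt ℝ L z := fun z hz =>
          diffAt_of_contDiffOn hD.smoothL hUopen (hCU hz)
        have hψdiff : ∀ z ∈ C, DifferentiableAt ℝ ψ z := fun z hz =>
          diffAt_of_contDiffOn hψsm hCopen hz
        have hwdiff : ∀ z ∈ C, DifferentiableAt ℝ w z := fun z hz =>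
          diffAt_of_contDiffOn hwsm hCopen hz
        have hfactor : ∀ z ∈ C, f z = w z * ψ z := fun z hz =>
          (div_mul_cancel₀ _ (hψposC z hz).ne').symm
        have hfd1 : ∀ z ∈ C, ∀ a, pd f a z = pd w a z * ψ z + w z * pd ψ a z := by
          intro z hz a
          rw [pd_congr_of_isOpen hCopen hfactor hz a]
          exact pd_mul (hwdiff z hz) (hψdiff z hz) a
        have hpdφ : ∀ (a : Fin n) (z : Fin n → ℝ), pd (fun u => φ u) a z = cφ a :=
          fun a z => pd_linear φ a z
        have hψ1 : ∀ z ∈ C, ∀ a, pd ψ a z = pd L a z + (2*ε*cφ a) * φ z := by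
          intro z hz a
          have hm2 : DifferentiableAt ℝ (fun u : Fin n → ℝ => φ u * φ u) z :=
            (hφdiff z).mul (hφdiff z)
          have h1 : pd ψ a z = pd L a z + pd (fun u => ε * (φ u * φ u)) a z :=
            pd_add (hLdiff z hz) (hm2.const_mul ε) a
          have h2 : pd (fun u => ε * (φ u * φ u)) a z = ε * pd (fun u => φ u * φ u) a z :=
            pd_const_mul ε hm2 a
          have h3 : pd (fun u : Fin n → ℝ => φ u * φ u) a z
              = pd (fun u => φ u) a z * φ z + φ z * pd (fun u => φ u) a z :=
            pd_mul (hφdiff z) (hφdiff z) a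
          rw [h1, h2, h3, hpdφ]
          ring
        have hψ2 : ∀ a b, pd (pd ψ a) b y0
            = 2 * gmet L y0 a b + 2*ε*(cφ a * cφ b) := by
          intro a b
          have h1 : pd (pd ψ a) b y0 = pd (fun z => pd L a z + (2*ε*cφ a) * φ z) b y0 :=
            pd_congr_of_isOpen hCopen (fun z hz => hψ1 z hz a) hy0C b
          have h2 : pd (fun z => pd L a z + (2*ε*cφ a) * φ z) b y0
              = pd (pd L a) b y0 + (2*ε*cφ a) * cφ b := by
            rw [pd_add (diffAt_pd hD.smoothL hUopen (hCU hy0C) a)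
              ((hφdiff y0).const_mul (2*ε*cφ a)) b,
              pd_const_mul (2*ε*cφ a) (hφdiff y0) b, hpdφ]
          have h3 : gmet L y0 a b = (1/2 : ℝ) * pd (pd L a) b y0 := rfl
          rw [h1, h2, h3]
          ring
        have hfd2 : ∀ a b, pd (pd f a) b y0
            = W a b * ψ y0 + w y0 * (2 * gmet L y0 a b + 2*ε*(cφ a * cφ b)) := by
          intro a b
          have hstep1 : pd (pd f a) b y0
              = pd (fun z => pd w a z * ψ z + w z * pd ψ a z) b y0 :=
            pd_congr_of_isOpen hCopen (fun z hz => hfd1 z hz a) hy0C b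
          have dwa := diffAt_pd hwsm hCopen hy0C a
          have dψ0 := hψdiff y0 hy0C
          have dw0 := hwdiff y0 hy0C
          have dψa := diffAt_pd hψsm hCopen hy0C a
          rw [hstep1, pd_add (u := fun z => pd w a z * ψ z) (v := fun z => w z * pd ψ a z)
              (dwa.mul dψ0) (dw0.mul dψa) b, pd_mul dwa dψ0 b,
            pd_mul dw0 dψa b, hcritpd a, hcritpd b, hψ2 a b]
          have hWab : W a b = pd (pd w a) b y0 := rfl
          rw [hWab]
          ring
        -- summing against the inverse metric
        have hTg : ∑ a, ∑ b, ginv L y0 a b * gmet L y0 a b = (n:ℝ) :=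
          trace_inv_self (lorentz_symm (hD.lorentz y0 (hCsub hy0C))) (hD.gInvU y0 (hCU hy0C))
        have hsum : ∑ a, ∑ b, ginv L y0 a b * pd (pd f a) b y0
            = ψ y0 * (∑ a, ∑ b, ginv L y0 a b * W a b)
              + w y0 * (2*(n:ℝ) + 2*ε*(Bf y0)) := by
          have h1 : ∀ a b, ginv L y0 a b * pd (pd f a) b y0
              = ψ y0 * (ginv L y0 a b * W a b)
                + (w y0 * 2) * (ginv L y0 a b * gmet L y0 a b)
                + (w y0 * (2*ε)) * (ginv L y0 a b * (cφ a * cφ b)) := by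
            intro a b
            rw [hfd2 a b]
            ring
          have hBfy0 : Bf y0 = ∑ a, ∑ b, ginv L y0 a b * (cφ a * cφ b) := rfl
          calc ∑ a, ∑ b, ginv L y0 a b * pd (pd f a) b y0
              = ∑ a, ∑ b, (ψ y0 * (ginv L y0 a b * W a b)
                + (w y0 * 2) * (ginv L y0 a b * gmet L y0 a b)
                + (w y0 * (2*ε)) * (ginv L y0 a b * (cφ a * cφ b))) :=
              Finset.sum_congr rfl fun a _ => Finset.sum_congr rfl fun b _ => h1 a b
            _ = ψ y0 * (∑ a, ∑ b, ginv L y0 a b * W a b)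
                + (w y0 * 2) * (∑ a, ∑ b, ginv L y0 a b * gmet L y0 a b)
                + (w y0 * (2*ε)) * (∑ a, ∑ b, ginv L y0 a b * (cφ a * cφ b)) := by
                simp only [Finset.sum_add_distrib, ← Finset.mul_sum]
            _ = ψ y0 * (∑ a, ∑ b, ginv L y0 a b * W a b)
                + w y0 * (2*(n:ℝ) + 2*ε*(Bf y0)) := by
                rw [hTg, hBfy0]
                ring
        have hPDEy0 : κ * f y0
            = L y0 * (ψ y0 * (∑ a, ∑ b, ginv L y0 a b * W a b)
              + w y0 * (2*(n:ℝ) + 2*ε*(Bf y0))) := by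
          rw [← hsum]
          exact hPDE y0 (hCsub hy0C)
        have hfy0 : f y0 = w y0 * ψ y0 := hfactor y0 hy0C
        have hψ0pos : 0 < ψ y0 := hψposC y0 hy0C
        have hTnn : 0 ≤ L y0 * (ψ y0 * (∑ a, ∑ b, ginv L y0 a b * W a b)) :=
          mul_nonneg hLy0pos.le (mul_nonneg hψ0pos.le hT)
        have hineq2 : L y0 * (2*(n:ℝ) + 2*ε*(Bf y0)) ≤ κ * ψ y0 := by
          by_contra hcon2
          push_neg at hcon2
          have hlt : w y0 * (κ * ψ y0) < w y0 * (L y0 * (2*(n:ℝ) + 2*ε*(Bf y0))) :=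
            (mul_lt_mul_iff_right₀ hmpos).2 hcon2
          have heq2 : κ * (w y0 * ψ y0)
              = L y0 * (ψ y0 * (∑ a, ∑ b, ginv L y0 a b * W a b))
                + w y0 * (L y0 * (2*(n:ℝ)+2*ε*(Bf y0))) := by
            rw [← hfy0, hPDEy0]
            ring
          nlinarith [hTnn]
        -- pointwise estimates at y0
        have hψ0eq : ψ y0 = L y0 + ε * (φ y0 * φ y0) := rfl
        have hbM : κ * (φ y0 * φ y0) - 2 * L y0 * (Bf y0) ≤ max (hMf zM) 0 := by
          have h1 : hMf y0 ≤ hMf zM := isMaxOn_iff.1 hzMmax y0 hy0KS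
          have h2 : hMf y0 = κ * (φ y0 * φ y0) - 2 * L y0 * (Bf y0) := rfl
          rw [← h2]
          exact le_trans h1 (le_max_left _ _)
        have hL0small : L y0 ≤ ε * M1 := by
          have h1 : (2*(n:ℝ) - κ) * L y0 ≤ ε * (κ*(φ y0*φ y0) - 2*L y0*(Bf y0)) := by
            have h0 := hineq2
            rw [hψ0eq] at h0
            nlinarith
          have h2 : (2*(n:ℝ) - κ) * L y0 ≤ ε * max (hMf zM) 0 :=
            le_trans h1 (mul_le_mul_of_nonneg_left hbM hε.le)
          rw [hM1def, ← mul_div_assoc, le_div_iff₀ h2nκ]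
          nlinarith [h2]
        have hmθ : w y0 ≤ K * θ := by
          have hfb : f y0 ≤ K * L y0 := hbound y0 ⟨hy0C, hy0S⟩
          have h1 : w y0 * ψ y0 ≤ K * L y0 := by rw [← hfy0]; exact hfb
          have h3 : L y0 / ψ y0 ≤ θ := by
            rw [hψ0eq, hθdef,
              div_le_div_iff₀ (by nlinarith [hLy0pos, mul_self_nonneg (φ y0), hε]) hMdpos]
            have hφ0 : dφ ≤ φ y0 := hdφle y0 hy0KS
            have ha1 : 0 ≤ (ε * M1 - L y0) * (dφ * dφ) :=
              mul_nonneg (sub_nonneg.2 hL0small) (mul_pos hdφpos hdφpos).le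
            have ha2 : dφ * dφ ≤ φ y0 * φ y0 :=
              mul_le_mul hφ0 hφ0 hdφpos.le (le_trans hdφpos.le hφ0)
            have ha3 : 0 ≤ M1 * ε * (φ y0 * φ y0 - dφ * dφ) :=
              mul_nonneg (mul_nonneg hM1nonneg hε.le) (sub_nonneg.2 ha2)
            nlinarith [ha1, ha3]
          have h4 : w y0 ≤ K * L y0 / ψ y0 := (le_div_iff₀ hψ0pos).2 h1
          calc w y0 ≤ K * L y0 / ψ y0 := h4
            _ = K * (L y0 / ψ y0) := by ring
            _ ≤ K * θ := mul_le_mul_of_nonneg_left h3 hK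
        -- conclude the ε-bound at y
        have hfy : f y = w y * ψ y := (div_mul_cancel₀ _ (hψposKS y hyKS).ne').symm
        have hwy : w y ≤ w y0 := isMaxOn_iff.1 hy0max y hyKS
        have hψy : 0 < ψ y := hψposKS y hyKS
        have hψyeq : ψ y = L y + ε * (φ y * φ y) := rfl
        calc f y = w y * ψ y := hfy
          _ ≤ (K*θ) * ψ y := mul_le_mul_of_nonneg_right (le_trans hwy hmθ) hψy.le
          _ = K * θ * (L y + ε*(φ y*φ y)) := by rw [hψyeq]
    -- let ε → 0
    by_contra hcon
    push_neg at hcon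
    have hD0 : 0 ≤ K * θ * (φ y * φ y) :=
      mul_nonneg (mul_nonneg hK hθnonneg) (mul_self_nonneg _)
    have hδpos : 0 < f y - K*θ*L y := by linarith
    have hεp : 0 < (f y - K*θ*L y) / (2*(K*θ*(φ y*φ y)+1)) := by positivity
    have h1 := hεbound _ hεp
    have hεval : (f y - K*θ*L y) / (2*(K*θ*(φ y*φ y)+1)) * (K*θ*(φ y*φ y))
        ≤ (f y - K*θ*L y)/2 := by
      rw [div_mul_eq_mul_div, div_le_div_iff₀ (by linarith) two_pos]
      nlinarith
    have h1' : f y ≤ K*θ*L y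
        + (f y - K*θ*L y) / (2*(K*θ*(φ y*φ y)+1)) * (K*θ*(φ y*φ y)) := by
      calc f y ≤ K*θ*(L y + ((f y - K*θ*L y)/(2*(K*θ*(φ y*φ y)+1))) * (φ y*φ y)) := h1
        _ = _ := by ring
    linarith
  -- iterate the contraction
  have hiter : ∀ j : ℕ, ∀ y ∈ C ∩ S1, f y ≤ (K0 * θ^j) * L y := by
    intro j
    induction j with
    | zero =>
        intro y hy
        have := hbase y (hCS1sub hy)
        simpa using this
    | succ j ih =>
        intro y hy
        have h1 := step (K0 * θ^j) (mul_nonneg hK0nonneg (pow_nonneg hθnonneg j)) ih y hy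
        calc f y ≤ (K0 * θ^j * θ) * L y := h1
          _ = (K0 * θ^(j+1)) * L y := by rw [pow_succ]; ring
  have hCS0 : ∀ y ∈ C ∩ S1, f y ≤ 0 := by
    intro y hy
    have htend : Filter.Tendsto (fun j : ℕ => (K0 * θ^j) * L y) Filter.atTop (nhds 0) := by
      have h1 := tendsto_pow_atTop_nhds_zero_of_lt_one hθnonneg hθlt1
      have h2 := (h1.const_mul K0).mul_const (L y)
      simpa using h2
    exact ge_of_tendsto' htend fun j => hiter j y hy
  -- extend to the closure
  intro y hy
  by_cases hyC : y ∈ C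
  · have hy0 : y ≠ 0 := hD.nzC y hyC
    have hny : 0 < ‖y‖ := norm_pos_iff.2 hy0
    have h1 := hCS0 _ (hnormalize y hyC)
    have h2 : f (‖y‖⁻¹ • y) = (‖y‖⁻¹)^(2:ℝ) * f y := hfhom y (hCV' hyC) _ (inv_pos.2 hny)
    have h3 : 0 < (‖y‖⁻¹:ℝ)^(2:ℝ) := Real.rpow_pos_of_pos (inv_pos.2 hny) _
    nlinarith [h1, h2, h3]
  · exact (hbd0 y hy hyC).le

/-- **Fiberwise form of Thm. 5.17** (vanishing of the Ricci scalar). Let `(C, L)` be a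
properly Lorentz fiberwise datum and `κ ≠ 0` with `κ < 2n`. If `f` is smooth and
positively 2-homogeneous on an open conic neighborhood of the closure of `C` and satisfies
`κ f − L g^{ab} f_{·a·b} = 0` on `C`, then `f = 0` on that closure. In particular (for
`n ≥ 3`, taking `κ = n + 2`), a solution of the Finslerian metric variational equation
`(n+2) f − L g^{ab} f_{·a·b} = 0` vanishes; applied to the Ricci scalar of a nonlinear
connection smoothly extendible to the boundary, this is Theorem C of the paper. -/
theorem ricci_scalar_vanishes
    {n : ℕ} (hn : 2 ≤ n) (C U : Set (Fin n → ℝ)) (L : (Fin n → ℝ) → ℝ)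
    (hD : LorentzDatum n C U L)
    (κ : ℝ) (hκ0 : κ ≠ 0) (hκ : κ < 2 * (n : ℝ))
    (V : Set (Fin n → ℝ)) (hVopen : IsOpen V) (hVconic : Conic V)
    (hVnz : ∀ y ∈ V, y ≠ 0) (hCV : clos C ⊆ V)
    (f : (Fin n → ℝ) → ℝ)
    (hfsmooth : ContDiffOn ℝ (⊤ : ℕ∞) f V) (hfhom : PosHom 2 V f)
    (heq : ∀ y ∈ C, κ * f y - L y * ∑ a, ∑ b, ginv L y a b * pd (pd f a) b y = 0) :
    ∀ y ∈ clos C, f y = 0 := by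
  intro y hy
  have h1 := key_nonpos hn C U L hD κ hκ0 hκ V hVopen hCV f hfsmooth hfhom heq y hy
  have hneg : ∀ z ∈ C, κ * (fun u => -f u) z
      - L z * ∑ a, ∑ b, ginv L z a b * pd (pd (fun u => -f u) a) b z = 0 := by
    intro z hz
    have hpd2 : ∀ a b : Fin n, pd (pd (fun u => -f u) a) b z = - pd (pd f a) b z := by
      intro a b
      have hfun : pd (fun u => -f u) a = fun u => -(pd f a u) :=
        funext fun u => pd_neg a u
      calc pd (pd (fun u => -f u) a) b z = pd (fun u => -(pd f a u)) b z := by rw [hfun]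
        _ = - pd (pd f a) b z := pd_neg b z
    have h0 := heq z hz
    simp only [hpd2]
    have hs : ∑ a, ∑ b, ginv L z a b * -(pd (pd f a) b z)
        = -∑ a, ∑ b, ginv L z a b * pd (pd f a) b z := by
      rw [← Finset.sum_neg_distrib]
      refine Finset.sum_congr rfl fun a _ => ?_
      rw [← Finset.sum_neg_distrib]
      exact Finset.sum_congr rfl fun b _ => by ring
    rw [hs]
    ring_nf
    ring_nf at h0
    linarith [h0]
  have hfneg : PosHom 2 V (fun u => -f u) := by
    intro z hz t ht
    show -f (t • z) = t^(2:ℝ) * -(f z)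
    rw [hfhom z hz t ht]
    ring
  have h2 := key_nonpos hn C U L hD κ hκ0 hκ V hVopen hCV (fun u => -f u)
    hfsmooth.neg hfneg hneg y hy
  linarith
end
end
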